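/- arXiv:2301.01639 — 4 statements merged into one kernel-verified Lean document; each statement's English description precedes it below -/
import Mathlib

section
/- Let N ≥ 1, Θ ∈ (0,∞)^N, and let Y : ℤ^N → ℝ be any function. Define ΔY_k = Σ_{i ∈ {0,1}^N} (−1)^{Σ_l i_l} Y(k_1−i_1, …, k_N−i_N), and define G : ℤ^N → ℝ by G_t = Σ_{k_1 = 1−t_2−…−t_N}^{t_1} Σ_{k_2 = 1−k_1−t_3−…−t_N}^{t_2} ⋯ Σ_{k_N = 1−k_1−…−k_{N−1}}^{t_N} e^{−⟨k,Θ⟩} ΔY_k when Σ_{l=1}^N t_l ≥ 1, and G_t = (−1)^N Σ_{k_1 = t_1+1}^{−t_2−…−t_N−N+1} Σ_{k_2 = t_2+1}^{−k_1−t_3−…−t_N−N+2} ⋯ Σ_{k_N = t_N+1}^{−k_1−…−k_{N−1}} e^{−⟨k,Θ⟩} ΔY_k when Σ_{l=1}^N t_l ≤ 0 (empty sums being zero). Then G_t = 0 for every t ∈ ℤ^N with Σ_{l=1}^N t_l ∈ {0, −1, …, −N+1}. -/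
open MeasureTheory Filter

noncomputable section

/-- Two families of real random variables indexed by `ℤ^N` have the same
finite-dimensional distributions. -/
def HasSameFDD {Ω : Type*} [MeasurableSpace Ω] {N : ℕ} (μ : Measure Ω)
    (X Y : (Fin N → ℤ) → Ω → ℝ) : Prop :=
  ∀ (n : ℕ) (t : Fin n → (Fin N → ℤ)),
    μ.map (fun ω i => X (t i) ω) = μ.map (fun ω i => Y (t i) ω)

/-- A random field on `ℤ^N` is stationary if every shift leaves the
finite-dimensional distributions unchanged. -/
def IsStationaryField {Ω : Type*} [MeasurableSpace Ω] {N : ℕ} (μ : Measure Ω)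
    (X : (Fin N → ℤ) → Ω → ℝ) : Prop :=
  ∀ s : Fin N → ℤ, HasSameFDD μ (fun t => X (t + s)) X

/-- A random field `Y` on `ℤ^N` is `Θ`-self-similar if `(Y_{t+s})_t` equals
`(e^{⟨s,Θ⟩} Y_t)_t` in finite-dimensional distributions for every `s`. -/
def IsSelfSimilar {Ω : Type*} [MeasurableSpace Ω] {N : ℕ} (μ : Measure Ω)
    (Θ : Fin N → ℝ) (Y : (Fin N → ℤ) → Ω → ℝ) : Prop :=
  ∀ s : Fin N → ℤ, HasSameFDD μ (fun t => Y (t + s))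
    (fun t ω => Real.exp (∑ l, (s l : ℝ) * Θ l) * Y t ω)

/-- The square increment `Δ_t X = Σ_{i ∈ {0,1}^N} (−1)^{Σ_l i_l} X_{t−i}`. -/
def sqInc {N : ℕ} (X : (Fin N → ℤ) → ℝ) (t : Fin N → ℤ) : ℝ :=
  ∑ i : Fin N → Bool,
    (-1 : ℝ) ^ ((∑ l, if i l then 1 else 0 : ℕ)) *
      X (fun l => t l - if i l then 1 else 0)

/-- A field has stationary (rectangular) increments if its square-increment
field is stationary. -/
def HasStationaryIncrements {Ω : Type*} [MeasurableSpace Ω] {N : ℕ} (μ : Measure Ω)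
    (G : (Fin N → ℤ) → Ω → ℝ) : Prop :=
  IsStationaryField μ (fun t ω => sqInc (fun u => G u ω) t)

/-- The inner product `⟨Θ̂, X̂⁻_t⟩ = Σ_{i ∈ {0,1}^N, i ≠ 0} (−1)^{1+Σ_l i_l}
e^{−⟨i,Θ⟩} X_{t−i}`. -/
def prevInner {N : ℕ} (Θ : Fin N → ℝ) (X : (Fin N → ℤ) → ℝ) (t : Fin N → ℤ) : ℝ :=
  ∑ i ∈ Finset.univ.filter (fun i : Fin N → Bool => i ≠ fun _ => false),
    (-1 : ℝ) ^ ((1 + ∑ l, if i l then 1 else 0 : ℕ)) *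
      (Real.exp (-∑ l, (if i l then (1 : ℝ) else 0) * Θ l) *
        X (fun l => t l - if i l then 1 else 0))

/-- Iterated limit in probability `lim_{M₁→∞} ⋯ lim_{M_k→∞} F(M₁,…,M_k) = Z`:
the innermost limit is over the last variable, the outermost over the first. -/
def IterLimInProb {Ω : Type*} [MeasurableSpace Ω] (μ : Measure Ω) :
    (k : ℕ) → ((Fin k → ℕ) → Ω → ℝ) → (Ω → ℝ) → Prop
  | 0, F, Z => ∀ ω, F (fun i => i.elim0) ω = Z ω
  | k + 1, F, Z => ∃ H : ℕ → Ω → ℝ,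
      (∀ M₁ : ℕ, IterLimInProb μ k (fun M => F (Fin.cons M₁ M)) (H M₁)) ∧
      TendstoInMeasure μ H atTop Z

/-- The class `𝒢_Θ`: stationary increment fields `G` vanishing on
`Σ_l t_l ∈ {0,−1,…,−N+1}` such that the iterated limit (in probability)
`lim_{M₁→∞}⋯lim_{M_N→∞} Σ_{j₁=−M₁}^{t₁}⋯Σ_{j_N=−M_N}^{t_N} e^{⟨j,Θ⟩} Δ_j G`
exists as an (almost surely finite, real-valued) random variable for every `t`. -/
def MemClassG {Ω : Type*} [MeasurableSpace Ω] {N : ℕ} (μ : Measure Ω)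
    (Θ : Fin N → ℝ) (G : (Fin N → ℤ) → Ω → ℝ) : Prop :=
  HasStationaryIncrements μ G ∧
  (∀ t : Fin N → ℤ, -(N : ℤ) + 1 ≤ ∑ l, t l → (∑ l, t l) ≤ 0 → ∀ ω, G t ω = 0) ∧
  (∀ t : Fin N → ℤ, ∃ Z : Ω → ℝ,
    IterLimInProb μ N (fun M ω =>
      ∑ j ∈ Finset.Icc (fun l => -(M l : ℤ)) t,
        Real.exp (∑ l, (j l : ℝ) * Θ l) * sqInc (fun u => G u ω) j) Z)

/-- The iterated (chained) sum
`Σ_{k₁ = c − t₂ − … − t_N}^{t₁} Σ_{k₂ = c − k₁ − t₃ − … − t_N}^{t₂} ⋯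
 Σ_{k_N = c − k₁ − … − k_{N−1}}^{t_N} f(k)`, with empty ranges contributing `0`. -/
def iterSumPos : (n : ℕ) → ℤ → (Fin n → ℤ) → ((Fin n → ℤ) → ℝ) → ℝ
  | 0, _, _, f => f (fun i => i.elim0)
  | n + 1, c, t, f =>
      ∑ k ∈ Finset.Icc (c - ∑ l : Fin n, t l.succ) (t 0),
        iterSumPos n (c - k) (fun l => t l.succ) (fun j => f (Fin.cons k j))

/-- The iterated (chained) sum
`Σ_{k₁ = t₁+1}^{c − t₂ − … − t_N − N + 1} Σ_{k₂ = t₂+1}^{c − k₁ − t₃ − … − t_N − N + 2} ⋯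
 Σ_{k_N = t_N+1}^{c − k₁ − … − k_{N−1}} f(k)`, with empty ranges contributing `0`. -/
def iterSumNeg : (n : ℕ) → ℤ → (Fin n → ℤ) → ((Fin n → ℤ) → ℝ) → ℝ
  | 0, _, _, f => f (fun i => i.elim0)
  | n + 1, c, t, f =>
      ∑ k ∈ Finset.Icc (t 0 + 1) (c - (∑ l : Fin n, t l.succ) - (n : ℤ)),
        iterSumNeg n (c - k) (fun l => t l.succ) (fun j => f (Fin.cons k j))

/-- The field `G` built from a (deterministic realisation of a) field `Y`:
for `Σ_l t_l ≥ 1` it is the chained sum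
`Σ_{k₁ = 1−t₂−…−t_N}^{t₁} ⋯ Σ_{k_N = 1−k₁−…−k_{N−1}}^{t_N} e^{−⟨k,Θ⟩} Δ_k Y`,
and for `Σ_l t_l ≤ 0` it is
`(−1)^N Σ_{k₁ = t₁+1}^{−t₂−…−t_N−N+1} ⋯ Σ_{k_N = t_N+1}^{−k₁−…−k_{N−1}} e^{−⟨k,Θ⟩} Δ_k Y`. -/
def lampertiG {N : ℕ} (Θ : Fin N → ℝ) (Y : (Fin N → ℤ) → ℝ) (t : Fin N → ℤ) : ℝ :=
  if 1 ≤ ∑ l, t l then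
    iterSumPos N 1 t (fun k => Real.exp (-∑ l, (k l : ℝ) * Θ l) * sqInc Y k)
  else
    (-1 : ℝ) ^ N *
      iterSumNeg N 0 t (fun k => Real.exp (-∑ l, (k l : ℝ) * Θ l) * sqInc Y k)
/-- Lemma gG (i): the field `G` built from `Y` via the chained
sums vanishes for every `t` with `Σ_l t_l ∈ {0, −1, …, −N+1}`. -/
theorem lampertiG_vanishes {N : ℕ} (hN : 1 ≤ N) (Θ : Fin N → ℝ)
    (hΘ : ∀ l, 0 < Θ l) (Y : (Fin N → ℤ) → ℝ) (t : Fin N → ℤ)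
    (h1 : -(N : ℤ) + 1 ≤ ∑ l, t l) (h2 : (∑ l, t l) ≤ 0) :
    lampertiG Θ Y t = 0 := by
  obtain ⟨n, rfl⟩ : ∃ n, N = n + 1 := ⟨N - 1, by omega⟩
  rw [lampertiG, if_neg (by omega)]
  rw [Fin.sum_univ_succ] at h1
  push_cast at h1
  rw [iterSumNeg, Finset.Icc_eq_empty (by simp; omega), Finset.sum_empty, mul_zero]
end
end

section
/- Let N ≥ 1, Θ ∈ (0,∞)^N, and let Y = (Y_t)_{t∈ℤ^N} be a Θ-self-similar random field. Define the random field G by G_t = Σ_{k_1 = 1−t_2−…−t_N}^{t_1} Σ_{k_2 = 1−k_1−t_3−…−t_N}^{t_2} ⋯ Σ_{k_N = 1−k_1−…−k_{N−1}}^{t_N} e^{−⟨k,Θ⟩} Δ_k Y when Σ_{l=1}^N t_l ≥ 1, and G_t = (−1)^N Σ_{k_1 = t_1+1}^{−t_2−…−t_N−N+1} Σ_{k_2 = t_2+1}^{−k_1−t_3−…−t_N−N+2} ⋯ Σ_{k_N = t_N+1}^{−k_1−…−k_{N−1}} e^{−⟨k,Θ⟩} Δ_k Y when Σ_{l=1}^N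 t_l ≤ 0 (empty sums being zero). Then G has stationary increments, i.e. the increment field (Δ_t G)_{t∈ℤ^N} is stationary. -/
open MeasureTheory Filter

noncomputable section

section Aux

variable {N : ℕ}

/-- The positive box `{k : k ≤ t, c ≤ Σ k}` as a finset. -/
def posBox (n : ℕ) (c : ℤ) (t : Fin n → ℤ) : Finset (Fin n → ℤ) :=
  (Finset.Icc (fun l => c - (∑ j, t j) + t l) t).filter fun k => c ≤ ∑ l, k l

/-- The negative box `{k : t + 1 ≤ k, Σ k ≤ c}` as a finset. -/
def negBox (n : ℕ) (c : ℤ) (t : Fin n → ℤ) : Finset (Fin n → ℤ) :=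
  (Finset.Icc (fun l => t l + 1) (fun l => c - (∑ j, t j) + t l + 1 - n)).filter
    fun k => ∑ l, k l ≤ c

lemma sum_sub_single {n : ℕ} (k : Fin n → ℤ) (l : Fin n) :
    ∑ j ∈ Finset.univ.erase l, k j = (∑ j, k j) - k l :=
  Finset.sum_erase_eq_sub (Finset.mem_univ l)

lemma mem_posBox {n : ℕ} {c : ℤ} {t k : Fin n → ℤ} :
    k ∈ posBox n c t ↔ (∀ l, k l ≤ t l) ∧ c ≤ ∑ l, k l := by
  simp only [posBox, Finset.mem_filter, Finset.mem_Icc, Pi.le_def]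
  constructor
  · rintro ⟨⟨h1, h2⟩, h3⟩; exact ⟨h2, h3⟩
  · rintro ⟨h1, h2⟩
    refine ⟨⟨fun l => ?_, h1⟩, h2⟩
    have h3 : ∑ j ∈ Finset.univ.erase l, k j ≤ ∑ j ∈ Finset.univ.erase l, t j :=
      Finset.sum_le_sum fun j _ => h1 j
    rw [sum_sub_single, sum_sub_single] at h3
    omega

lemma mem_negBox {n : ℕ} {c : ℤ} {t k : Fin n → ℤ} :
    k ∈ negBox n c t ↔ (∀ l, t l + 1 ≤ k l) ∧ (∑ l, k l) ≤ c := by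
  simp only [negBox, Finset.mem_filter, Finset.mem_Icc, Pi.le_def]
  constructor
  · rintro ⟨⟨h1, h2⟩, h3⟩; exact ⟨h1, h3⟩
  · rintro ⟨h1, h2⟩
    refine ⟨⟨h1, fun l => ?_⟩, h2⟩
    have h3 : ∑ j ∈ Finset.univ.erase l, (t j + 1) ≤ ∑ j ∈ Finset.univ.erase l, k j :=
      Finset.sum_le_sum fun j _ => h1 j
    rw [sum_sub_single (fun j => t j + 1) l] at h3
    rw [sum_sub_single] at h3
    have h4 : ∑ j, (t j + 1) = (∑ j, t j) + n := by
      rw [Finset.sum_add_distrib]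
      simp
    omega

lemma iterSumPos_eq (n : ℕ) (c : ℤ) (t : Fin n → ℤ) (f : (Fin n → ℤ) → ℝ)
    (hc : n = 0 → c ≤ 0) :
    iterSumPos n c t f = ∑ k ∈ posBox n c t, f k := by
  induction n generalizing c with
  | zero =>
    have hset : posBox 0 c t = {fun i => Fin.elim0 i} := by
      apply Finset.eq_singleton_iff_unique_mem.2
      refine ⟨mem_posBox.2 ⟨fun l => l.elim0, by simpa using hc rfl⟩,
        fun k _ => funext fun l => l.elim0⟩
    rw [iterSumPos, hset, Finset.sum_singleton]
  | succ n ih =>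
    rw [iterSumPos]
    have step : ∀ k ∈ Finset.Icc (c - ∑ l : Fin n, t l.succ) (t 0),
        iterSumPos n (c - k) (fun l => t l.succ) (fun j => f (Fin.cons k j))
          = ∑ j ∈ posBox n (c - k) (fun l => t l.succ), f (Fin.cons k j) := by
      intro k hk
      apply ih
      intro hn
      subst hn
      simp only [Finset.mem_Icc, Finset.univ_eq_empty, Finset.sum_empty] at hk
      omega
    rw [Finset.sum_congr rfl step, Finset.sum_sigma']
    refine Finset.sum_nbij' (i := fun p => Fin.cons p.1 p.2)
      (j := fun K => ⟨K 0, fun l => K l.succ⟩) ?_ ?_ ?_ ?_ ?_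
    · rintro ⟨k, j⟩ hp
      dsimp only at hp ⊢
      simp only [Finset.mem_sigma, Finset.mem_Icc] at hp
      obtain ⟨⟨hk1, hk2⟩, hj⟩ := hp
      rw [mem_posBox] at hj ⊢
      refine ⟨fun l => ?_, ?_⟩
      · refine Fin.cases ?_ ?_ l
        · simpa using hk2
        · intro l'; simpa using hj.1 l'
      · rw [Fin.sum_univ_succ]
        simp only [Fin.cons_zero, Fin.cons_succ]
        have := hj.2
        omega
    · intro K hK
      rw [mem_posBox] at hK
      simp only [Finset.mem_sigma, Finset.mem_Icc, mem_posBox]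
      have hsum : ∑ l, K l = K 0 + ∑ l : Fin n, K l.succ := Fin.sum_univ_succ K
      have hle : ∑ l : Fin n, K l.succ ≤ ∑ l : Fin n, t l.succ :=
        Finset.sum_le_sum fun l _ => hK.1 l.succ
      refine ⟨⟨?_, hK.1 0⟩, fun l => hK.1 l.succ, ?_⟩
      · have := hK.2; omega
      · have := hK.2; omega
    · rintro ⟨k, j⟩ _
      simp only [Fin.cons_zero, Fin.cons_succ]
    · intro K _
      exact Fin.cons_self_tail K
    · rintro ⟨k, j⟩ _
      rfl

lemma iterSumNeg_eq (n : ℕ) (c : ℤ) (t : Fin n → ℤ) (f : (Fin n → ℤ) → ℝ)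
    (hc : n = 0 → 0 ≤ c) :
    iterSumNeg n c t f = ∑ k ∈ negBox n c t, f k := by
  induction n generalizing c with
  | zero =>
    have hset : negBox 0 c t = {fun i => Fin.elim0 i} := by
      apply Finset.eq_singleton_iff_unique_mem.2
      refine ⟨mem_negBox.2 ⟨fun l => l.elim0, by simpa using hc rfl⟩,
        fun k _ => funext fun l => l.elim0⟩
    rw [iterSumNeg, hset, Finset.sum_singleton]
  | succ n ih =>
    rw [iterSumNeg]
    have step : ∀ k ∈ Finset.Icc (t 0 + 1) (c - (∑ l : Fin n, t l.succ) - (n : ℤ)),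
        iterSumNeg n (c - k) (fun l => t l.succ) (fun j => f (Fin.cons k j))
          = ∑ j ∈ negBox n (c - k) (fun l => t l.succ), f (Fin.cons k j) := by
      intro k hk
      apply ih
      intro hn
      subst hn
      simp only [Finset.mem_Icc, Finset.univ_eq_empty, Finset.sum_empty,
        Nat.cast_zero] at hk
      omega
    rw [Finset.sum_congr rfl step, Finset.sum_sigma']
    refine Finset.sum_nbij' (i := fun p => Fin.cons p.1 p.2)
      (j := fun K => ⟨K 0, fun l => K l.succ⟩) ?_ ?_ ?_ ?_ ?_
    · rintro ⟨k, j⟩ hp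
      dsimp only at hp ⊢
      simp only [Finset.mem_sigma, Finset.mem_Icc] at hp
      obtain ⟨⟨hk1, hk2⟩, hj⟩ := hp
      rw [mem_negBox] at hj ⊢
      refine ⟨fun l => ?_, ?_⟩
      · refine Fin.cases ?_ ?_ l
        · simpa using hk1
        · intro l'; simpa using hj.1 l'
      · rw [Fin.sum_univ_succ]
        simp only [Fin.cons_zero, Fin.cons_succ]
        have := hj.2
        omega
    · intro K hK
      rw [mem_negBox] at hK
      simp only [Finset.mem_sigma, Finset.mem_Icc, mem_negBox]
      have hsum : ∑ l, K l = K 0 + ∑ l : Fin n, K l.succ := Fin.sum_univ_succ K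
      have hle : ∑ l : Fin n, (t l.succ + 1) ≤ ∑ l : Fin n, K l.succ :=
        Finset.sum_le_sum fun l _ => hK.1 l.succ
      have hts : ∑ l : Fin n, (t l.succ + 1) = (∑ l : Fin n, t l.succ) + n := by
        rw [Finset.sum_add_distrib]; simp
      refine ⟨⟨hK.1 0, ?_⟩, fun l => hK.1 l.succ, ?_⟩
      · have := hK.2; omega
      · have := hK.2; omega
    · rintro ⟨k, j⟩ _
      simp only [Fin.cons_zero, Fin.cons_succ]
    · intro K _
      exact Fin.cons_self_tail K
    · rintro ⟨k, j⟩ _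
      rfl

end Aux
section IE

variable {N : ℕ}

lemma sqInc_add (A B : (Fin N → ℤ) → ℝ) (t : Fin N → ℤ) :
    sqInc (fun u => A u + B u) t = sqInc A t + sqInc B t := by
  simp [sqInc, mul_add, Finset.sum_add_distrib]

lemma sqInc_const_mul (r : ℝ) (A : (Fin N → ℤ) → ℝ) (t : Fin N → ℤ) :
    sqInc (fun u => r * A u) t = r * sqInc A t := by
  simp [sqInc, Finset.mul_sum, mul_left_comm]

lemma neg_one_pow_eq_prod (i : Fin N → Bool) :
    (-1 : ℝ) ^ ((∑ l, if i l then 1 else 0 : ℕ)) = ∏ l, (if i l then (-1:ℝ) else 1) := by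
  rw [← Finset.prod_pow_eq_pow_sum]
  exact Finset.prod_congr rfl fun l _ => by by_cases h : i l <;> simp [h]

lemma incl_excl_pos (g : (Fin N → ℤ) → ℝ) (t : Fin N → ℤ) :
    sqInc (fun u => ∑ k ∈ posBox N 1 u, g k) t = if 1 ≤ ∑ l, t l then g t else 0 := by
  classical
  unfold sqInc
  have hsub : ∀ i : Fin N → Bool,
      posBox N 1 (fun l => t l - if i l then 1 else 0) ⊆ posBox N 1 t := by
    intro i k hk
    rw [mem_posBox] at hk ⊢
    exact ⟨fun l => le_trans (hk.1 l) (by by_cases h : i l <;> simp [h]), hk.2⟩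
  have h1 : ∀ i : Fin N → Bool,
      (-1:ℝ)^((∑ l, if i l then 1 else 0 : ℕ)) *
          ∑ k ∈ posBox N 1 (fun l => t l - if i l then 1 else 0), g k
        = ∑ k ∈ posBox N 1 t,
            (∏ l, ((if i l then (-1:ℝ) else 1) *
              (if k l ≤ t l - (if i l then 1 else 0) then 1 else 0))) * g k := by
    intro i
    have : ∑ k ∈ posBox N 1 (fun l => t l - if i l then 1 else 0), g k
        = ∑ k ∈ posBox N 1 t,
            (if k ∈ posBox N 1 (fun l => t l - if i l then 1 else 0) then g k else 0) := by
      rw [Finset.sum_ite_mem, Finset.inter_eq_right.2 (hsub i)]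
    rw [this, Finset.mul_sum]
    refine Finset.sum_congr rfl fun k hk => ?_
    rw [mem_posBox] at hk
    rw [Finset.prod_mul_distrib, ← neg_one_pow_eq_prod, Finset.prod_boole]
    have hmem : (k ∈ posBox N 1 (fun l => t l - if i l then 1 else 0))
        ↔ (∀ l ∈ Finset.univ, k l ≤ t l - if i l then 1 else 0) := by
      rw [mem_posBox]
      simp only [Finset.mem_univ, true_implies]
      exact ⟨fun h => h.1, fun h => ⟨h, hk.2⟩⟩
    by_cases h : ∀ l ∈ Finset.univ, k l ≤ t l - if i l then 1 else 0
    · rw [if_pos h, if_pos (hmem.2 h)]; ring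
    · rw [if_neg h, if_neg (fun hh => h (hmem.1 hh))]; ring
  rw [Finset.sum_congr rfl fun i _ => h1 i, Finset.sum_comm]
  have h2 : ∀ k ∈ posBox N 1 t,
      ∑ i : Fin N → Bool, (∏ l, ((if i l then (-1:ℝ) else 1) *
          (if k l ≤ t l - (if i l then 1 else 0) then 1 else 0))) * g k
        = (if k = t then 1 else 0) * g k := by
    intro k hk
    rw [mem_posBox] at hk
    rw [← Finset.sum_mul]
    congr 1
    have := (Finset.prod_univ_sum (fun _ : Fin N => (Finset.univ : Finset Bool))
      (fun l b => (if b then (-1:ℝ) else 1) *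
        (if k l ≤ t l - (if b then 1 else 0) then 1 else 0))).symm
    rw [Fintype.piFinset_univ] at this
    rw [this]
    have h3 : ∀ l : Fin N,
        (∑ b : Bool, (if b then (-1:ℝ) else 1) *
          (if k l ≤ t l - (if b then 1 else 0) then 1 else 0))
          = if k l = t l then 1 else 0 := by
      intro l
      have hkl := hk.1 l
      rw [Fintype.sum_bool]
      by_cases h : k l = t l
      · have h' : ¬ k l ≤ t l - 1 := by omega
        simp [h, h', hkl]
      · have h' : k l ≤ t l - 1 := by omega
        simp [h, h', hkl]
    rw [Finset.prod_congr rfl fun l _ => h3 l, Finset.prod_boole]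
    simp only [Finset.mem_univ, true_implies]
    by_cases h : k = t
    · rw [if_pos (fun l => by rw [h]), if_pos h]
    · rw [if_neg (fun hh => h (funext hh)), if_neg h]
  rw [Finset.sum_congr rfl h2]
  simp only [ite_mul, one_mul, zero_mul]
  rw [Finset.sum_ite_eq' (posBox N 1 t) t g]
  by_cases h : 1 ≤ ∑ l, t l
  · rw [if_pos (mem_posBox.2 ⟨fun l => le_refl _, h⟩), if_pos h]
  · rw [if_neg (fun hh => h (mem_posBox.1 hh).2), if_neg h]

end IE
section IEneg

variable {N : ℕ}

lemma incl_excl_neg_aux (g : (Fin N → ℤ) → ℝ) (t : Fin N → ℤ) :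
    sqInc (fun u => ∑ k ∈ negBox N 0 u, g k) t
      = (-1:ℝ)^N * (if (∑ l, t l) ≤ 0 then g t else 0) := by
  classical
  unfold sqInc
  set U := negBox N 0 (fun l => t l - 1) with hU
  have hsub : ∀ i : Fin N → Bool,
      negBox N 0 (fun l => t l - if i l then 1 else 0) ⊆ U := by
    intro i k hk
    rw [mem_negBox] at hk
    rw [hU, mem_negBox]
    refine ⟨fun l => ?_, hk.2⟩
    have := hk.1 l
    by_cases h : i l <;> simp [h] at this ⊢ <;> omega
  have h1 : ∀ i : Fin N → Bool,
      (-1:ℝ)^((∑ l, if i l then 1 else 0 : ℕ)) *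
          ∑ k ∈ negBox N 0 (fun l => t l - if i l then 1 else 0), g k
        = ∑ k ∈ U,
            (∏ l, ((if i l then (-1:ℝ) else 1) *
              (if t l - (if i l then 1 else 0) + 1 ≤ k l then 1 else 0))) * g k := by
    intro i
    have heq : ∑ k ∈ negBox N 0 (fun l => t l - if i l then 1 else 0), g k
        = ∑ k ∈ U,
            (if k ∈ negBox N 0 (fun l => t l - if i l then 1 else 0) then g k else 0) := by
      rw [Finset.sum_ite_mem, Finset.inter_eq_right.2 (hsub i)]
    rw [heq, Finset.mul_sum]
    refine Finset.sum_congr rfl fun k hk => ?_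
    rw [hU, mem_negBox] at hk
    rw [Finset.prod_mul_distrib, ← neg_one_pow_eq_prod, Finset.prod_boole]
    have hmem : (k ∈ negBox N 0 (fun l => t l - if i l then 1 else 0))
        ↔ (∀ l ∈ Finset.univ, t l - (if i l then 1 else 0) + 1 ≤ k l) := by
      rw [mem_negBox]
      simp only [Finset.mem_univ, true_implies]
      exact ⟨fun h => h.1, fun h => ⟨h, hk.2⟩⟩
    by_cases h : ∀ l ∈ Finset.univ, t l - (if i l then 1 else 0) + 1 ≤ k l
    · rw [if_pos h, if_pos (hmem.2 h)]; ring
    · rw [if_neg h, if_neg (fun hh => h (hmem.1 hh))]; ring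
  rw [Finset.sum_congr rfl fun i _ => h1 i, Finset.sum_comm]
  have h2 : ∀ k ∈ U,
      ∑ i : Fin N → Bool, (∏ l, ((if i l then (-1:ℝ) else 1) *
          (if t l - (if i l then 1 else 0) + 1 ≤ k l then 1 else 0))) * g k
        = (-1:ℝ)^N * ((if k = t then 1 else 0) * g k) := by
    intro k hk
    rw [hU, mem_negBox] at hk
    rw [← Finset.sum_mul]
    rw [← mul_assoc]
    congr 1
    have := (Finset.prod_univ_sum (fun _ : Fin N => (Finset.univ : Finset Bool))
      (fun l b => (if b then (-1:ℝ) else 1) *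
        (if t l - (if b then 1 else 0) + 1 ≤ k l then 1 else 0))).symm
    rw [Fintype.piFinset_univ] at this
    rw [this]
    have h3 : ∀ l : Fin N,
        (∑ b : Bool, (if b then (-1:ℝ) else 1) *
          (if t l - (if b then 1 else 0) + 1 ≤ k l then 1 else 0))
          = (-1:ℝ) * (if k l = t l then 1 else 0) := by
      intro l
      have hkl : t l ≤ k l := by have := hk.1 l; omega
      rw [Fintype.sum_bool]
      by_cases h : k l = t l
      · have h' : ¬ t l + 1 ≤ k l := by omega
        simp [h, h', hkl]
      · have h' : t l + 1 ≤ k l := by omega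
        simp [h, h', hkl]
    rw [Finset.prod_congr rfl fun l _ => h3 l, Finset.prod_mul_distrib,
      Finset.prod_const, Finset.prod_boole, Finset.card_univ, Fintype.card_fin]
    simp only [Finset.mem_univ, true_implies]
    by_cases h : k = t
    · rw [if_pos (fun l => by rw [h]), if_pos h]
    · rw [if_neg (fun hh => h (funext hh)), if_neg h]
  rw [Finset.sum_congr rfl h2, ← Finset.mul_sum]
  congr 1
  simp only [ite_mul, one_mul, zero_mul]
  rw [Finset.sum_ite_eq' U t g]
  by_cases h : (∑ l, t l) ≤ 0
  · rw [if_pos (by rw [hU, mem_negBox]; exact ⟨fun l => by omega, h⟩), if_pos h]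
  · rw [if_neg (fun hh => h (mem_negBox.1 hh).2), if_neg h]

lemma incl_excl_neg (g : (Fin N → ℤ) → ℝ) (t : Fin N → ℤ) :
    sqInc (fun u => (-1:ℝ)^N * ∑ k ∈ negBox N 0 u, g k) t
      = if (∑ l, t l) ≤ 0 then g t else 0 := by
  rw [sqInc_const_mul, incl_excl_neg_aux, ← mul_assoc, ← pow_add,
    Even.neg_one_pow ⟨N, rfl⟩, one_mul]

end IEneg
section Key

variable {N : ℕ}

lemma lampertiG_eq (hN : 1 ≤ N) (Θ : Fin N → ℝ) (Y : (Fin N → ℤ) → ℝ) (t : Fin N → ℤ) :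
    lampertiG Θ Y t
      = (∑ k ∈ posBox N 1 t, Real.exp (-∑ l, (k l : ℝ) * Θ l) * sqInc Y k)
        + (-1:ℝ)^N * ∑ k ∈ negBox N 0 t, Real.exp (-∑ l, (k l : ℝ) * Θ l) * sqInc Y k := by
  unfold lampertiG
  split_ifs with h
  · have hneg : negBox N 0 t = ∅ := by
      rw [Finset.eq_empty_iff_forall_notMem]
      intro k hk
      rw [mem_negBox] at hk
      have h1 : ∑ l, (t l + 1) ≤ ∑ l, k l := Finset.sum_le_sum fun l _ => hk.1 l
      rw [Finset.sum_add_distrib] at h1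
      simp only [Finset.sum_const, Finset.card_univ, Fintype.card_fin, nsmul_eq_mul,
        mul_one] at h1
      have := hk.2
      omega
    rw [hneg, iterSumPos_eq N 1 t _ (by omega)]
    simp
  · have hpos : posBox N 1 t = ∅ := by
      rw [Finset.eq_empty_iff_forall_notMem]
      intro k hk
      rw [mem_posBox] at hk
      have h1 : ∑ l, k l ≤ ∑ l, t l := Finset.sum_le_sum fun l _ => hk.1 l
      have := hk.2
      omega
    rw [hpos, iterSumNeg_eq N 0 t _ (by omega)]
    simp

lemma lampertiG_sqInc (hN : 1 ≤ N) (Θ : Fin N → ℝ) (Y : (Fin N → ℤ) → ℝ) (t : Fin N → ℤ) :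
    sqInc (lampertiG Θ Y) t = Real.exp (-∑ l, (t l : ℝ) * Θ l) * sqInc Y t := by
  have hfun : lampertiG Θ Y = fun u =>
      (∑ k ∈ posBox N 1 u, Real.exp (-∑ l, (k l : ℝ) * Θ l) * sqInc Y k)
        + (-1:ℝ)^N * ∑ k ∈ negBox N 0 u, Real.exp (-∑ l, (k l : ℝ) * Θ l) * sqInc Y k :=
    funext fun u => lampertiG_eq hN Θ Y u
  rw [hfun, sqInc_add, incl_excl_pos, incl_excl_neg]
  by_cases h : 1 ≤ ∑ l, t l
  · rw [if_pos h, if_neg (by omega)]; ring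
  · rw [if_neg h, if_pos (by omega)]; ring

end Key
/-- Lemma gG (iii): if `Y` is a `Θ`-self-similar random field,
then the field `G` built pathwise from `Y` via the chained sums has stationary
increments. -/
theorem lampertiG_stationary_increments {Ω : Type*} [MeasurableSpace Ω]
    (μ : Measure Ω) [IsProbabilityMeasure μ] {N : ℕ} (hN : 1 ≤ N)
    (Θ : Fin N → ℝ) (hΘ : ∀ l, 0 < Θ l)
    (Y : (Fin N → ℤ) → Ω → ℝ) (hmeas : ∀ t, Measurable (Y t))
    (hY : IsSelfSimilar μ Θ Y) :
    HasStationaryIncrements μ (fun t ω => lampertiG Θ (fun u => Y u ω) t) := by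
  classical
  intro s n t
  have hkey := fun (ω : Ω) (v : Fin N → ℤ) => lampertiG_sqInc hN Θ (fun w => Y w ω) v
  let P := Fin n × (Fin N → Bool)
  let e : Fin (Fintype.card P) ≃ P := (Fintype.equivFin P).symm
  let u : P → (Fin N → ℤ) := fun p l => t p.1 l - (if p.2 l then 1 else 0)
  let W1 : Ω → Fin (Fintype.card P) → ℝ := fun ω a => Y (u (e a) + s) ω
  let W2 : Ω → Fin (Fintype.card P) → ℝ := fun ω a =>
    Real.exp (∑ l, (s l : ℝ) * Θ l) * Y (u (e a)) ω
  let Φ : (Fin (Fintype.card P) → ℝ) → Fin n → ℝ := fun v i =>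
    Real.exp (-∑ l, ((t i + s) l : ℝ) * Θ l) *
      ∑ j : Fin N → Bool, (-1:ℝ)^((∑ l, if j l then 1 else 0 : ℕ)) * v (e.symm (i, j))
  have hΦ : Measurable Φ := by
    apply measurable_pi_lambda
    intro i
    exact (Finset.measurable_sum Finset.univ fun j _ =>
      (measurable_pi_apply (e.symm (i, j))).const_mul _).const_mul _
  have hW1 : Measurable W1 := measurable_pi_lambda _ fun a => hmeas _
  have hW2 : Measurable W2 := measurable_pi_lambda _ fun a => (hmeas _).const_mul _
  have hL : (fun ω (i : Fin n) =>
      sqInc (fun v => lampertiG Θ (fun w => Y w ω) v) (t i + s)) = Φ ∘ W1 := by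
    funext ω i
    show _ = Φ (W1 ω) i
    rw [hkey]
    unfold sqInc
    simp only [Φ, W1, Equiv.apply_symm_apply]
    congr 1
    refine Finset.sum_congr rfl fun j _ => ?_
    have harg : (fun l => (t i + s) l - if j l = true then 1 else 0) = u (i, j) + s := by
      funext l
      simp only [u, Pi.add_apply]
      ring
    rw [harg]
  have hR : (fun ω (i : Fin n) =>
      sqInc (fun v => lampertiG Θ (fun w => Y w ω) v) (t i)) = Φ ∘ W2 := by
    funext ω i
    show _ = Φ (W2 ω) i
    rw [hkey]
    unfold sqInc
    simp only [Φ, W2, Equiv.apply_symm_apply]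
    have hE : ∀ j : Fin N → Bool, (-1:ℝ)^((∑ l, if j l then 1 else 0 : ℕ)) *
        (Real.exp (∑ l, (s l : ℝ) * Θ l) * Y (u (i, j)) ω)
        = Real.exp (∑ l, (s l : ℝ) * Θ l) *
          ((-1:ℝ)^((∑ l, if j l then 1 else 0 : ℕ)) * Y (u (i, j)) ω) := fun j => by ring
    rw [Finset.sum_congr rfl fun j _ => hE j, ← Finset.mul_sum, ← mul_assoc,
      ← Real.exp_add]
    have hexp : (-∑ l, ((t i + s) l : ℝ) * Θ l) + ∑ l, (s l : ℝ) * Θ l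
        = -∑ l, (t i l : ℝ) * Θ l := by
      have : ∑ l, ((t i + s) l : ℝ) * Θ l
          = ∑ l, ((t i l : ℝ) * Θ l + (s l : ℝ) * Θ l) := by
        refine Finset.sum_congr rfl fun l _ => ?_
        push_cast [Pi.add_apply]
        ring
      rw [this, Finset.sum_add_distrib]
      ring
    rw [hexp]
  rw [hL, hR, ← Measure.map_map hΦ hW1, ← Measure.map_map hΦ hW2]
  congr 1
  exact hY s (Fintype.card P) (fun a => u (e a))
end
end

section
/- Let N ≥ 1, Θ = (θ_1,…,θ_N) ∈ (0,∞)^N, and let X = (X_t)_{t∈ℤ^N} be a stationary random field. Then there exists a field G = (G_t)_{t∈ℤ^N} in the class 𝒢_Θ such that X_t = ⟨Θ̂, X̂⁻_t⟩ + Δ_t G for every t ∈ ℤ^N. -/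
open MeasureTheory Filter
open Topology ENNReal

noncomputable section

namespace Laux


/-- the weighted increment `e^{-⟨t,Θ⟩} Δ_t (e^{⟨·,Θ⟩} Y)` -/
def gfun {N : ℕ} (Θ : Fin N → ℝ) (Y : (Fin N → ℤ) → ℝ) (k : Fin N → ℤ) : ℝ :=
  ∑ i : Fin N → Bool, (-1 : ℝ) ^ ((∑ l, if i l then 1 else 0 : ℕ)) *
    (Real.exp (-∑ l, (if i l then (1:ℝ) else 0) * Θ l) *
      Y (fun l => k l - if i l then 1 else 0))

lemma gfun_eq {N : ℕ} (Θ : Fin N → ℝ) (Y : (Fin N → ℤ) → ℝ) (k : Fin N → ℤ) :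
    Y k = prevInner Θ Y k + gfun Θ Y k := by
  classical
  have h0 : ((fun _ => false : Fin N → Bool) : Fin N → Bool) ∈ Finset.univ := Finset.mem_univ _
  have hsplit : gfun Θ Y k
      = (∑ i ∈ Finset.univ.erase (fun _ => false), (-1 : ℝ) ^ ((∑ l, if i l then 1 else 0 : ℕ)) *
          (Real.exp (-∑ l, (if i l then (1:ℝ) else 0) * Θ l) *
            Y (fun l => k l - if i l then 1 else 0)))
        + Y k := by
    rw [gfun, ← Finset.sum_erase_add _ _ h0]
    simp
  have herase : Finset.univ.erase (fun _ => false : Fin N → Bool)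
      = Finset.univ.filter (fun i : Fin N → Bool => i ≠ fun _ => false) := by
    ext i; simp [Finset.mem_erase, and_comm]
  have hneg : (∑ i ∈ Finset.univ.erase (fun _ => false : Fin N → Bool),
      (-1 : ℝ) ^ ((∑ l, if i l then 1 else 0 : ℕ)) *
        (Real.exp (-∑ l, (if i l then (1:ℝ) else 0) * Θ l) *
          Y (fun l => k l - if i l then 1 else 0))) = - prevInner Θ Y k := by
    rw [prevInner, ← herase, ← Finset.sum_neg_distrib]
    refine Finset.sum_congr rfl fun i _ => ?_
    rw [pow_add, pow_one]
    ring
  rw [hsplit, hneg]; ring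

lemma exp_gfun {N : ℕ} (Θ : Fin N → ℝ) (Y : (Fin N → ℤ) → ℝ) (j : Fin N → ℤ) :
    sqInc (fun u => Real.exp (∑ l, (u l : ℝ) * Θ l) * Y u) j
      = Real.exp (∑ l, (j l : ℝ) * Θ l) * gfun Θ Y j := by
  rw [sqInc, gfun, Finset.mul_sum]
  refine Finset.sum_congr rfl fun i _ => ?_
  have : Real.exp (∑ l, ((j l - if i l then 1 else 0 : ℤ) : ℝ) * Θ l)
      = Real.exp (∑ l, (j l : ℝ) * Θ l) * Real.exp (-∑ l, (if i l then (1:ℝ) else 0) * Θ l) := by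
    rw [← Real.exp_add]
    congr 1
    rw [← Finset.sum_neg_distrib, ← Finset.sum_add_distrib]
    refine Finset.sum_congr rfl fun l _ => ?_
    push_cast [apply_ite (fun z : ℤ => (z : ℝ))]
    ring
  rw [this]; ring


lemma sum_erase_le {N : ℕ} (l : Fin N) (k u : Fin N → ℤ) (h : ∀ j, k j ≤ u j) :
    (∑ j, k j) - k l ≤ (∑ j, u j) - u l := by
  have h1 : ∑ j ∈ Finset.univ.erase l, k j ≤ ∑ j ∈ Finset.univ.erase l, u j :=
    Finset.sum_le_sum (fun j _ => h j)
  have h2 := Finset.sum_erase_add Finset.univ k (Finset.mem_univ l)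
  have h3 := Finset.sum_erase_add Finset.univ u (Finset.mem_univ l)
  omega

def Sset {N : ℕ} (t : Fin N → ℤ) : Finset (Fin N → ℤ) :=
  (Finset.Icc (fun l => t l + 1 - ∑ j, t j) t).filter (fun k => 1 ≤ ∑ l, k l)

def Tset {N : ℕ} (t : Fin N → ℤ) : Finset (Fin N → ℤ) :=
  (Finset.Icc (fun l => t l + 1) (fun l => t l + 1 - (∑ j, t j) - N)).filter
    (fun k => (∑ l, k l) ≤ 0)

lemma mem_Sset {N : ℕ} (t k : Fin N → ℤ) :
    k ∈ Sset t ↔ (∀ l, k l ≤ t l) ∧ 1 ≤ ∑ l, k l := by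
  simp only [Sset, Finset.mem_filter, Finset.mem_Icc, Pi.le_def]
  constructor
  · rintro ⟨⟨_, h2⟩, h3⟩; exact ⟨h2, h3⟩
  · rintro ⟨h1, h2⟩
    refine ⟨⟨fun l => ?_, h1⟩, h2⟩
    have := sum_erase_le l k t h1
    omega

lemma mem_Tset {N : ℕ} (t k : Fin N → ℤ) :
    k ∈ Tset t ↔ (∀ l, t l + 1 ≤ k l) ∧ (∑ l, k l) ≤ 0 := by
  simp only [Tset, Finset.mem_filter, Finset.mem_Icc, Pi.le_def]
  constructor
  · rintro ⟨⟨h1, _⟩, h3⟩; exact ⟨h1, h3⟩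
  · rintro ⟨h1, h2⟩
    refine ⟨⟨h1, fun l => ?_⟩, h2⟩
    have h3 : (∑ j, (t j + 1)) - (t l + 1) ≤ (∑ j, k j) - k l :=
      sum_erase_le l (fun j => t j + 1) k h1
    have h4 : ∑ j, (t j + 1) = (∑ j, t j) + N := by
      rw [Finset.sum_add_distrib]; simp [Finset.card_univ]
    omega

def Gfun {N : ℕ} (Θ : Fin N → ℝ) (Y : (Fin N → ℤ) → ℝ) (t : Fin N → ℤ) : ℝ :=
  (∑ k ∈ Sset t, gfun Θ Y k) + (-1:ℝ)^N * ∑ k ∈ Tset t, gfun Θ Y k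

lemma Gfun_band {N : ℕ} (Θ : Fin N → ℝ) (Y : (Fin N → ℤ) → ℝ) (t : Fin N → ℤ)
    (h1 : -(N : ℤ) + 1 ≤ ∑ l, t l) (h2 : (∑ l, t l) ≤ 0) : Gfun Θ Y t = 0 := by
  have hS : Sset t = ∅ := by
    refine Finset.eq_empty_of_forall_notMem fun k hk => ?_
    rw [mem_Sset] at hk
    have := Finset.sum_le_sum (fun l (_ : l ∈ Finset.univ) => hk.1 l)
    omega
  have hT : Tset t = ∅ := by
    refine Finset.eq_empty_of_forall_notMem fun k hk => ?_
    rw [mem_Tset] at hk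
    have h3 := Finset.sum_le_sum (fun l (_ : l ∈ Finset.univ) => hk.1 l)
    have h4 : ∑ j, (t j + 1) = (∑ j, t j) + N := by
      rw [Finset.sum_add_distrib]; simp [Finset.card_univ]
    omega
  simp [Gfun, hS, hT]


lemma ite_forall_prod {N : ℕ} (P : Fin N → Prop) [DecidablePred P] (c : ℝ) :
    (if (∀ l, P l) then c else 0) = c * ∏ l, if P l then (1:ℝ) else 0 := by
  by_cases h : ∀ l, P l
  · simp [h]
  · push_neg at h
    obtain ⟨l, hl⟩ := h
    rw [if_neg (by intro hh; exact hl (hh l)),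
      Finset.prod_eq_zero (Finset.mem_univ l) (by simp [hl]), mul_zero]

lemma sum_prod_bool {N : ℕ} (f : Fin N → Bool → ℝ) :
    (∑ i : Fin N → Bool, ∏ l, f l (i l)) = ∏ l, (f l false + f l true) := by
  induction N with
  | zero => simp
  | succ n ih =>
    rw [← Equiv.sum_comp (Fin.consEquiv (fun _ : Fin (n+1) => Bool))
      (fun i => ∏ l, f l (i l)), Fintype.sum_prod_type]
    simp only [Fin.consEquiv_apply]
    have : ∀ (b : Bool) (j : Fin n → Bool),
        (∏ l, f l ((Fin.cons b j : Fin (n+1) → Bool) l)) = f 0 b * ∏ l : Fin n, f l.succ (j l) := by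
      intro b j
      rw [Fin.prod_univ_succ]
      simp [Fin.cons_zero, Fin.cons_succ]
    simp only [this]
    rw [Fintype.sum_bool, ← Finset.mul_sum, ← Finset.mul_sum,
      ih (fun l b => f l.succ b), Fin.prod_univ_succ, ← add_mul]
    ring

lemma sum_sign_ite_le {N : ℕ} (a b : Fin N → ℤ) (Q : Prop) [Decidable Q] (c : ℝ) :
    (∑ i : Fin N → Bool, (-1:ℝ) ^ ((∑ l, if i l then 1 else 0 : ℕ)) *
      (if (∀ l, a l ≤ b l - (if i l then 1 else 0)) ∧ Q then c else 0))
    = if a = b ∧ Q then c else 0 := by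
  classical
  set c' : ℝ := if Q then c else 0 with hc'
  have hterm : ∀ i : Fin N → Bool,
      (-1:ℝ) ^ ((∑ l, if i l then 1 else 0 : ℕ)) *
        (if (∀ l, a l ≤ b l - (if i l then 1 else 0)) ∧ Q then c else 0)
      = c' * ∏ l, ((-1:ℝ) ^ (if i l then 1 else 0 : ℕ) *
          (if a l ≤ b l - (if i l then 1 else 0) then (1:ℝ) else 0)) := by
    intro i
    rw [ite_and, ← Finset.prod_pow_eq_pow_sum,
      ite_forall_prod (fun l => a l ≤ b l - (if i l then 1 else 0)) c',
      Finset.prod_mul_distrib]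
    ring
  rw [Finset.sum_congr rfl (fun i _ => hterm i), ← Finset.mul_sum,
    sum_prod_bool (fun l bb => (-1:ℝ) ^ (if bb then 1 else 0 : ℕ) *
      (if a l ≤ b l - (if bb then 1 else 0) then (1:ℝ) else 0))]
  have hfac : ∀ l, ((-1:ℝ) ^ (if false then 1 else 0 : ℕ) *
        (if a l ≤ b l - (if false then 1 else 0) then (1:ℝ) else 0)
      + (-1:ℝ) ^ (if true then 1 else 0 : ℕ) *
        (if a l ≤ b l - (if true then 1 else 0) then (1:ℝ) else 0))
      = if a l = b l then (1:ℝ) else 0 := by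
    intro l
    by_cases h1 : a l ≤ b l <;> by_cases h2 : a l ≤ b l - 1 <;>
      by_cases h3 : a l = b l <;> simp [h1, h2, h3] <;> omega
  rw [Finset.prod_congr rfl (fun l _ => hfac l)]
  by_cases h : a = b
  · subst h; simp [ite_and, hc']
  · have : ∃ l, ¬ a l = b l := by
      by_contra hh; push_neg at hh; exact h (funext hh)
    obtain ⟨l, hl⟩ := this
    rw [Finset.prod_eq_zero (Finset.mem_univ l) (by simp [hl])]
    simp [h]

lemma sum_sign_ite_ge {N : ℕ} (a b : Fin N → ℤ) (Q : Prop) [Decidable Q] (c : ℝ) :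
    (∑ i : Fin N → Bool, (-1:ℝ) ^ ((∑ l, if i l then 1 else 0 : ℕ)) *
      (if (∀ l, b l - (if i l then 1 else 0) + 1 ≤ a l) ∧ Q then c else 0))
    = (-1:ℝ)^N * if a = b ∧ Q then c else 0 := by
  classical
  set c' : ℝ := if Q then c else 0 with hc'
  have hterm : ∀ i : Fin N → Bool,
      (-1:ℝ) ^ ((∑ l, if i l then 1 else 0 : ℕ)) *
        (if (∀ l, b l - (if i l then 1 else 0) + 1 ≤ a l) ∧ Q then c else 0)
      = c' * ∏ l, ((-1:ℝ) ^ (if i l then 1 else 0 : ℕ) *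
          (if b l - (if i l then 1 else 0) + 1 ≤ a l then (1:ℝ) else 0)) := by
    intro i
    rw [ite_and, ← Finset.prod_pow_eq_pow_sum,
      ite_forall_prod (fun l => b l - (if i l then 1 else 0) + 1 ≤ a l) c',
      Finset.prod_mul_distrib]
    ring
  rw [Finset.sum_congr rfl (fun i _ => hterm i), ← Finset.mul_sum,
    sum_prod_bool (fun l bb => (-1:ℝ) ^ (if bb then 1 else 0 : ℕ) *
      (if b l - (if bb then 1 else 0) + 1 ≤ a l then (1:ℝ) else 0))]
  have hfac : ∀ l, ((-1:ℝ) ^ (if false then 1 else 0 : ℕ) *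
        (if b l - (if false then 1 else 0) + 1 ≤ a l then (1:ℝ) else 0)
      + (-1:ℝ) ^ (if true then 1 else 0 : ℕ) *
        (if b l - (if true then 1 else 0) + 1 ≤ a l then (1:ℝ) else 0))
      = -1 * if a l = b l then (1:ℝ) else 0 := by
    intro l
    rcases lt_trichotomy (a l) (b l) with h | h | h
    · have h1 : ¬ (b l ≤ a l) := by omega
      have h2 : ¬ (b l + 1 ≤ a l) := by omega
      have h3 : ¬ a l = b l := by omega
      simp [h1, h2, h3]
    · have h1 : (b l ≤ a l) := by omega
      have h2 : ¬ (b l + 1 ≤ a l) := by omega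
      simp [h1, h2, h]
    · have h1 : (b l ≤ a l) := by omega
      have h2 : (b l + 1 ≤ a l) := by omega
      have h3 : ¬ a l = b l := by omega
      simp [h1, h2, h3]
  rw [Finset.prod_congr rfl (fun l _ => hfac l), Finset.prod_mul_distrib]
  simp only [Finset.prod_const, Finset.card_univ, Fintype.card_fin]
  by_cases h : a = b
  · subst h; simp [ite_and, hc']; ring
  · have : ∃ l, ¬ a l = b l := by
      by_contra hh; push_neg at hh; exact h (funext hh)
    obtain ⟨l, hl⟩ := this
    rw [Finset.prod_eq_zero (Finset.mem_univ l) (by simp [hl])]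
    simp [h]


lemma sqInc_Gfun {N : ℕ} (hN : 1 ≤ N) (Θ : Fin N → ℝ) (Y : (Fin N → ℤ) → ℝ)
    (t : Fin N → ℤ) : sqInc (Gfun Θ Y) t = gfun Θ Y t := by
  classical
  set S : ℤ := ∑ j, t j with hSdef
  set C : ℤ := |S| + N + 1 with hCdef
  have hC0 : 0 ≤ C := by
    have := abs_nonneg S; omega
  have habs1 : S ≤ |S| := le_abs_self S
  have habs2 : -|S| ≤ S := neg_abs_le S
  set B : Finset (Fin N → ℤ) := Finset.Icc (fun l => t l - C) (fun l => t l + C) with hBdef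
  -- rewriting the S-sums as indicator sums over the box B
  have hSu : ∀ u : Fin N → ℤ, (∀ l, t l - 1 ≤ u l ∧ u l ≤ t l) →
      (∑ k ∈ Sset u, gfun Θ Y k)
        = ∑ k ∈ B, if (∀ l, k l ≤ u l) ∧ 1 ≤ ∑ l, k l then gfun Θ Y k else 0 := by
    intro u hu
    rw [← Finset.sum_filter]
    congr 1
    ext k
    rw [mem_Sset, Finset.mem_filter]
    constructor
    · rintro ⟨hk1, hk2⟩
      refine ⟨?_, hk1, hk2⟩
      rw [hBdef, Finset.mem_Icc]
      constructor <;> (rw [Pi.le_def]; intro l)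
      · have e1 := sum_erase_le l k u hk1
        have e2 : (∑ j, u j) ≤ S := by
          rw [hSdef]; exact Finset.sum_le_sum (fun j _ => (hu j).2)
        have e3 := (hu l).1
        omega
      · have := hk1 l
        have := (hu l).2
        omega
    · rintro ⟨_, hk1, hk2⟩
      exact ⟨hk1, hk2⟩
  have hTu : ∀ u : Fin N → ℤ, (∀ l, t l - 1 ≤ u l ∧ u l ≤ t l) →
      (∑ k ∈ Tset u, gfun Θ Y k)
        = ∑ k ∈ B, if (∀ l, u l + 1 ≤ k l) ∧ (∑ l, k l) ≤ 0 then gfun Θ Y k else 0 := by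
    intro u hu
    rw [← Finset.sum_filter]
    congr 1
    ext k
    rw [mem_Tset, Finset.mem_filter]
    constructor
    · rintro ⟨hk1, hk2⟩
      refine ⟨?_, hk1, hk2⟩
      rw [hBdef, Finset.mem_Icc]
      constructor <;> (rw [Pi.le_def]; intro l)
      · have := hk1 l
        have := (hu l).1
        omega
      · have e1 : (∑ j, (u j + 1)) - (u l + 1) ≤ (∑ j, k j) - k l :=
          sum_erase_le l (fun j => u j + 1) k hk1
        have e2 : ∑ j, (u j + 1) = (∑ j, u j) + N := by
          rw [Finset.sum_add_distrib]; simp [Finset.card_univ]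
        have e3 : S - N ≤ ∑ j, u j := by
          have e4 : ∑ j, (t j - 1) ≤ ∑ j, u j :=
            Finset.sum_le_sum (fun j _ => (hu j).1)
          have e5 : ∑ j, (t j - 1) = S - N := by
            rw [Finset.sum_sub_distrib, hSdef]; simp [Finset.card_univ]
          omega
        have e6 := (hu l).2
        omega
    · rintro ⟨_, hk1, hk2⟩
      exact ⟨hk1, hk2⟩
  have hu : ∀ i : Fin N → Bool, ∀ l,
      t l - 1 ≤ t l - (if i l then 1 else 0 : ℤ) ∧ t l - (if i l then 1 else 0 : ℤ) ≤ t l := by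
    intro i l; split <;> omega
  rw [sqInc]
  have hrw : ∀ i : Fin N → Bool,
      Gfun Θ Y (fun l => t l - if i l then 1 else 0)
        = (∑ k ∈ B, if (∀ l, k l ≤ t l - (if i l then 1 else 0)) ∧ 1 ≤ ∑ l, k l
            then gfun Θ Y k else 0)
          + (-1:ℝ)^N * ∑ k ∈ B, if (∀ l, t l - (if i l then 1 else 0) + 1 ≤ k l) ∧ (∑ l, k l) ≤ 0
            then gfun Θ Y k else 0 := by
    intro i
    rw [Gfun, hSu _ (hu i), hTu _ (hu i)]
  rw [Finset.sum_congr rfl (fun i _ => by rw [hrw i])]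
  simp only [mul_add]
  rw [Finset.sum_add_distrib]
  have hA : (∑ i : Fin N → Bool, (-1:ℝ) ^ ((∑ l, if i l then 1 else 0 : ℕ)) *
      ∑ k ∈ B, if (∀ l, k l ≤ t l - (if i l then 1 else 0)) ∧ 1 ≤ ∑ l, k l
        then gfun Θ Y k else 0)
      = ∑ k ∈ B, if k = t ∧ 1 ≤ ∑ l, k l then gfun Θ Y k else 0 := by
    simp only [Finset.mul_sum]
    rw [Finset.sum_comm]
    exact Finset.sum_congr rfl (fun k _ =>
      sum_sign_ite_le k t (1 ≤ ∑ l, k l) (gfun Θ Y k))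
  have hB : (∑ i : Fin N → Bool, (-1:ℝ) ^ ((∑ l, if i l then 1 else 0 : ℕ)) *
      ((-1:ℝ)^N * ∑ k ∈ B, if (∀ l, t l - (if i l then 1 else 0) + 1 ≤ k l) ∧ (∑ l, k l) ≤ 0
        then gfun Θ Y k else 0))
      = ∑ k ∈ B, if k = t ∧ (∑ l, k l) ≤ 0 then gfun Θ Y k else 0 := by
    have hpow : ((-1:ℝ))^N * ((-1:ℝ))^N = 1 := by
      rw [← pow_add, ← two_mul]; exact Even.neg_one_pow ⟨N, by ring⟩
    calc (∑ i : Fin N → Bool, (-1:ℝ) ^ ((∑ l, if i l then 1 else 0 : ℕ)) *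
        ((-1:ℝ)^N * ∑ k ∈ B, if (∀ l, t l - (if i l then 1 else 0) + 1 ≤ k l) ∧ (∑ l, k l) ≤ 0
          then gfun Θ Y k else 0))
        = (-1:ℝ)^N * ∑ i : Fin N → Bool, ∑ k ∈ B,
            (-1:ℝ) ^ ((∑ l, if i l then 1 else 0 : ℕ)) *
            (if (∀ l, t l - (if i l then 1 else 0) + 1 ≤ k l) ∧ (∑ l, k l) ≤ 0
              then gfun Θ Y k else 0) := by
          rw [Finset.mul_sum]
          refine Finset.sum_congr rfl fun i _ => ?_
          rw [Finset.mul_sum, Finset.mul_sum, Finset.mul_sum]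
          refine Finset.sum_congr rfl fun k _ => ?_
          ring
      _ = (-1:ℝ)^N * ∑ k ∈ B, ∑ i : Fin N → Bool,
            (-1:ℝ) ^ ((∑ l, if i l then 1 else 0 : ℕ)) *
            (if (∀ l, t l - (if i l then 1 else 0) + 1 ≤ k l) ∧ (∑ l, k l) ≤ 0
              then gfun Θ Y k else 0) := by rw [Finset.sum_comm]
      _ = (-1:ℝ)^N * ∑ k ∈ B, (-1:ℝ)^N *
            (if k = t ∧ (∑ l, k l) ≤ 0 then gfun Θ Y k else 0) := by
          refine congrArg _ (Finset.sum_congr rfl fun k _ => ?_)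
          exact sum_sign_ite_ge k t ((∑ l, k l) ≤ 0) (gfun Θ Y k)
      _ = ∑ k ∈ B, if k = t ∧ (∑ l, k l) ≤ 0 then gfun Θ Y k else 0 := by
          rw [← Finset.mul_sum, ← mul_assoc, hpow, one_mul]
  rw [hA, hB, ← Finset.sum_add_distrib]
  have hcomb : ∀ k, ((if k = t ∧ 1 ≤ ∑ l, k l then gfun Θ Y k else 0)
      + (if k = t ∧ (∑ l, k l) ≤ 0 then gfun Θ Y k else 0))
      = if k = t then gfun Θ Y k else 0 := by
    intro k
    by_cases hk : k = t
    · subst hk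
      by_cases h1 : 1 ≤ ∑ l, k l
      · rw [if_pos ⟨rfl, h1⟩, if_neg (by push_neg; intro; omega), if_pos rfl, add_zero]
      · rw [if_neg (by push_neg; intro; omega), if_pos ⟨rfl, by omega⟩, if_pos rfl, zero_add]
    · rw [if_neg (by tauto), if_neg (by tauto), if_neg hk, add_zero]
  rw [Finset.sum_congr rfl (fun k _ => hcomb k)]
  rw [Finset.sum_ite_eq' B t (gfun Θ Y)]
  rw [if_pos]
  rw [hBdef, Finset.mem_Icc]
  constructor <;> (rw [Pi.le_def]; intro l) <;> omega



lemma gfun_stationary {Ω : Type*} [MeasurableSpace Ω] (μ : Measure Ω) {N : ℕ}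
    (Θ : Fin N → ℝ) (X : (Fin N → ℤ) → Ω → ℝ) (hmeas : ∀ t, Measurable (X t))
    (hX : IsStationaryField μ X) :
    IsStationaryField μ (fun t ω => gfun Θ (fun u => X u ω) t) := by
  classical
  intro s n t
  set m := Fintype.card (Fin n × (Fin N → Bool)) with hm
  set e : (Fin n × (Fin N → Bool)) ≃ Fin m := Fintype.equivFin _ with he
  set tt : Fin m → (Fin N → ℤ) :=
    fun a => fun l => t (e.symm a).1 l - (if (e.symm a).2 l then 1 else 0) with htt
  set Ψ : (Fin m → ℝ) → (Fin n → ℝ) :=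
    fun v j => ∑ i : Fin N → Bool, (-1:ℝ) ^ ((∑ l, if i l then 1 else 0 : ℕ)) *
      (Real.exp (-∑ l, (if i l then (1:ℝ) else 0) * Θ l) * v (e (j, i))) with hΨdef
  have hΨ : Measurable Ψ := by
    refine measurable_pi_lambda _ fun j => Finset.measurable_sum _ fun i _ => ?_
    exact ((measurable_pi_apply (e (j,i))).const_mul _).const_mul _
  have h1 : Measurable (fun ω => fun a : Fin m => X (tt a + s) ω) :=
    measurable_pi_lambda _ fun a => hmeas _
  have h2 : Measurable (fun ω => fun a : Fin m => X (tt a) ω) :=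
    measurable_pi_lambda _ fun a => hmeas _
  have keyS : (fun ω (j : Fin n) => gfun Θ (fun u => X u ω) (t j + s))
      = Ψ ∘ (fun ω a => X (tt a + s) ω) := by
    funext ω j
    simp only [Function.comp, hΨdef, gfun]
    refine Finset.sum_congr rfl fun i _ => ?_
    have harg : tt (e (j, i)) + s = fun l => (t j + s) l - (if i l then 1 else 0 : ℤ) := by
      funext l
      simp only [htt, Equiv.symm_apply_apply, Pi.add_apply]
      ring
    rw [harg]
  have keyT : (fun ω (j : Fin n) => gfun Θ (fun u => X u ω) (t j))
      = Ψ ∘ (fun ω a => X (tt a) ω) := by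
    funext ω j
    simp only [Function.comp, hΨdef, gfun]
    refine Finset.sum_congr rfl fun i _ => ?_
    have harg : tt (e (j, i)) = fun l => t j l - (if i l then 1 else 0 : ℤ) := by
      funext l
      simp only [htt, Equiv.symm_apply_apply]
    rw [harg]
  show μ.map (fun ω (j : Fin n) => gfun Θ (fun u => X u ω) (t j + s))
      = μ.map (fun ω (j : Fin n) => gfun Θ (fun u => X u ω) (t j))
  rw [keyS, keyT, ← Measure.map_map hΨ h1, ← Measure.map_map hΨ h2, hX s m tt]



variable {Ω : Type*} [MeasurableSpace Ω]

def TendZero (μ : Measure Ω) {k : ℕ} (X : (Fin k → ℤ) → Ω → ℝ) : Prop :=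
  ∀ (δ : ℝ), 0 < δ → ∀ (r : ℕ → ℝ) (u : ℕ → Fin k → ℤ), Tendsto r atTop (𝓝 0) →
    Tendsto (fun M => μ {ω | δ ≤ |r M * X (u M) ω|}) atTop (𝓝 (0 : ℝ≥0∞))

lemma tendZero_of_stationary (μ : Measure Ω) [IsProbabilityMeasure μ] {N : ℕ}
    (X : (Fin N → ℤ) → Ω → ℝ) (hmeas : ∀ t, Measurable (X t)) (hX : IsStationaryField μ X) :
    TendZero μ X := by
  classical
  intro δ hδ r u hr
  have hlaw : ∀ v, μ.map (X v) = μ.map (X (fun _ => 0)) := by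
    intro v
    have h := hX v 1 (fun _ => (fun _ => 0 : Fin N → ℤ))
    have h0 : ((fun _ => 0 : Fin N → ℤ) + v) = v := by funext l; simp
    simp only [h0] at h
    have heval : Measurable (fun g : Fin 1 → ℝ => g 0) := measurable_pi_apply 0
    have e1 : Measurable (fun ω => fun _ : Fin 1 => X v ω) :=
      measurable_pi_lambda _ fun _ => hmeas _
    have e2 : Measurable (fun ω => fun _ : Fin 1 => X (fun _ => 0) ω) :=
      measurable_pi_lambda _ fun _ => hmeas _
    calc μ.map (X v)
        = (μ.map (fun ω (_ : Fin 1) => X v ω)).map (fun g => g 0) := by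
          rw [Measure.map_map heval e1]; rfl
      _ = (μ.map (fun ω (_ : Fin 1) => X (fun _ => 0) ω)).map (fun g => g 0) := by rw [h]
      _ = μ.map (X (fun _ => 0)) := by rw [Measure.map_map heval e2]; rfl
  have hνprob : IsProbabilityMeasure (μ.map (X (fun _ => 0))) :=
    Measure.isProbabilityMeasure_map (hmeas _).aemeasurable
  have hset : ∀ (c : ℝ) (v : Fin N → ℤ),
      μ {ω | δ ≤ |c * X v ω|} = (μ.map (X (fun _ => 0))) {x | δ ≤ |c * x|} := by
    intro c v
    have hS : MeasurableSet {x : ℝ | δ ≤ |c * x|} :=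
      measurableSet_le measurable_const (measurable_id.const_mul c).abs
    rw [← hlaw v, Measure.map_apply (hmeas v) hS]
    rfl
  simp only [hset]
  have htail : Tendsto (fun R : ℕ => (μ.map (X (fun _ => 0))) {x : ℝ | (R:ℝ) ≤ |x|}) atTop (𝓝 0) := by
    have hmono : Antitone (fun R : ℕ => {x : ℝ | (R:ℝ) ≤ |x|}) := by
      intro R1 R2 h x hx
      simp only [Set.mem_setOf_eq] at hx ⊢
      have : (R1:ℝ) ≤ R2 := by exact_mod_cast h
      linarith
    have hmeasset : ∀ R : ℕ, NullMeasurableSet {x : ℝ | (R:ℝ) ≤ |x|} (μ.map (X (fun _ => 0))) :=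
      fun R => (measurableSet_le measurable_const measurable_abs).nullMeasurableSet
    have hint : (⋂ R : ℕ, {x : ℝ | (R:ℝ) ≤ |x|}) = ∅ := by
      ext x
      simp only [Set.mem_iInter, Set.mem_setOf_eq, Set.mem_empty_iff_false, iff_false]
      push_neg
      obtain ⟨R, hR⟩ := exists_nat_gt |x|
      exact ⟨R, hR⟩
    have h2 := tendsto_measure_iInter_atTop hmeasset hmono ⟨0, measure_ne_top _ _⟩
    rw [hint] at h2
    simpa [Function.comp_def] using h2
  rw [ENNReal.tendsto_atTop_zero]
  intro ε hε
  obtain ⟨R0, hR0⟩ := ENNReal.tendsto_atTop_zero.mp htail ε hε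
  set R : ℕ := max R0 1 with hRdef
  have hR2 : (μ.map (X (fun _ => 0))) {x : ℝ | (R:ℝ) ≤ |x|} ≤ ε := hR0 _ (le_max_left _ _)
  have hRpos : (0:ℝ) < R := by
    have : (1:ℕ) ≤ R := le_max_right _ _
    exact_mod_cast this
  have hδR : 0 < δ / R := div_pos hδ hRpos
  have h3 : Tendsto (fun M => |r M|) atTop (𝓝 0) := by simpa using hr.abs
  have hev : ∀ᶠ M in atTop, |r M| < δ / R := h3.eventually_lt_const hδR
  obtain ⟨N₀, hN₀⟩ := eventually_atTop.mp hev
  refine ⟨N₀, fun M hM => ?_⟩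
  refine le_trans (measure_mono ?_) hR2
  intro x hx
  simp only [Set.mem_setOf_eq] at hx ⊢
  by_contra hcon
  push_neg at hcon
  have h4 := hN₀ M hM
  have e1 : |r M| * |x| ≤ |r M| * R := mul_le_mul_of_nonneg_left hcon.le (abs_nonneg _)
  have e2 : |r M| * R < (δ/R) * R := mul_lt_mul_of_pos_right h4 hRpos
  have e3 : (δ/R) * (R:ℝ) = δ := div_mul_cancel₀ δ (ne_of_gt hRpos)
  rw [abs_mul] at hx
  linarith

lemma tendZero_comb {μ : Measure Ω} {k k' : ℕ} {X : (Fin k → ℤ) → Ω → ℝ}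
    (h : TendZero μ X) (c₁ c₂ : ℝ) (f₁ f₂ : (Fin k' → ℤ) → (Fin k → ℤ)) :
    TendZero μ (fun v ω => c₁ * X (f₁ v) ω + c₂ * X (f₂ v) ω) := by
  intro δ hδ r u hr
  have hhalf : 0 < δ/2 := by linarith
  have h1 := h (δ/2) hhalf (fun M => r M * c₁) (fun M => f₁ (u M))
    (by simpa using hr.mul_const c₁)
  have h2 := h (δ/2) hhalf (fun M => r M * c₂) (fun M => f₂ (u M))
    (by simpa using hr.mul_const c₂)
  have hsub : ∀ M, μ {ω | δ ≤ |r M * (c₁ * X (f₁ (u M)) ω + c₂ * X (f₂ (u M)) ω)|}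
      ≤ μ {ω | δ/2 ≤ |r M * c₁ * X (f₁ (u M)) ω|} + μ {ω | δ/2 ≤ |r M * c₂ * X (f₂ (u M)) ω|} := by
    intro M
    refine le_trans (measure_mono ?_) (measure_union_le _ _)
    intro ω hω
    simp only [Set.mem_setOf_eq, Set.mem_union] at hω ⊢
    by_contra hcon
    push_neg at hcon
    obtain ⟨e1, e2⟩ := hcon
    have habs := abs_add_le (r M * c₁ * X (f₁ (u M)) ω) (r M * c₂ * X (f₂ (u M)) ω)
    have harg : r M * (c₁ * X (f₁ (u M)) ω + c₂ * X (f₂ (u M)) ω)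
        = r M * c₁ * X (f₁ (u M)) ω + r M * c₂ * X (f₂ (u M)) ω := by ring
    rw [harg] at hω
    linarith
  have hzero : Tendsto (fun M => μ {ω | δ/2 ≤ |r M * c₁ * X (f₁ (u M)) ω|}
      + μ {ω | δ/2 ≤ |r M * c₂ * X (f₂ (u M)) ω|}) atTop (𝓝 (0:ℝ≥0∞)) := by
    have := Tendsto.add h1 h2
    simpa using this
  exact tendsto_of_tendsto_of_tendsto_of_le_of_le tendsto_const_nhds hzero
    (fun M => by simp) hsub

lemma tendstoInMeasure_const (μ : Measure Ω) (Z : Ω → ℝ) :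
    TendstoInMeasure μ (fun _ : ℕ => Z) atTop Z := by
  rw [tendstoInMeasure_iff_dist]
  intro ε hε
  have h0 : {ω | ε ≤ dist (Z ω) (Z ω)} = (∅ : Set Ω) := by
    ext ω; simp only [dist_self, Set.mem_setOf_eq, Set.mem_empty_iff_false, iff_false]; linarith
  simp only [h0, measure_empty]
  exact tendsto_const_nhds

lemma iterLim_const (μ : Measure Ω) : ∀ (k : ℕ) (Z : Ω → ℝ),
    IterLimInProb μ k (fun _ => Z) Z
  | 0, Z => fun ω => rfl
  | k+1, Z => ⟨fun _ => Z, fun M₁ => iterLim_const μ k Z, tendstoInMeasure_const μ Z⟩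

lemma iterLim_congr {μ : Measure Ω} {k : ℕ} {F G : (Fin k → ℕ) → Ω → ℝ} {Z W : Ω → ℝ}
    (hF : F = G) (hZ : Z = W) (h : IterLimInProb μ k G W) : IterLimInProb μ k F Z := by
  subst hF; subst hZ; exact h

lemma sum_Icc_cons {k : ℕ} (a b : Fin (k+1) → ℤ) (f : (Fin (k+1) → ℤ) → ℝ) :
    ∑ j ∈ Finset.Icc a b, f j
      = ∑ j₀ ∈ Finset.Icc (a 0) (b 0), ∑ j' ∈ Finset.Icc (Fin.tail a) (Fin.tail b),
          f (Fin.cons j₀ j') := by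
  have hp : ∑ p ∈ (Finset.Icc (a 0) (b 0)) ×ˢ (Finset.Icc (Fin.tail a) (Fin.tail b)),
      f (Fin.cons p.1 p.2)
      = ∑ j₀ ∈ Finset.Icc (a 0) (b 0), ∑ j' ∈ Finset.Icc (Fin.tail a) (Fin.tail b),
          f (Fin.cons j₀ j') := Finset.sum_product _ _ _
  rw [← hp]
  refine Finset.sum_nbij' (fun j => (j 0, Fin.tail j)) (fun p => Fin.cons p.1 p.2)
    ?_ ?_ ?_ ?_ ?_
  · intro j hj
    rw [Finset.mem_Icc] at hj
    rw [Finset.mem_product, Finset.mem_Icc, Finset.mem_Icc]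
    exact ⟨⟨hj.1 0, hj.2 0⟩, fun l => hj.1 l.succ, fun l => hj.2 l.succ⟩
  · intro p hp
    rw [Finset.mem_product, Finset.mem_Icc, Finset.mem_Icc] at hp
    rw [Finset.mem_Icc]
    constructor
    · intro i
      induction i using Fin.cases with
      | zero => simpa using hp.1.1
      | succ l => simpa [Fin.tail] using hp.2.1 l
    · intro i
      induction i using Fin.cases with
      | zero => simpa using hp.1.2
      | succ l => simpa [Fin.tail] using hp.2.2 l
  · intro j _; exact Fin.cons_self_tail j
  · intro p _
    simp [Fin.tail_cons, Fin.cons_zero]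
  · intro j _
    rw [Fin.cons_self_tail]

lemma sqInc_cons {k : ℕ} (Y : (Fin (k+1) → ℤ) → ℝ) (j₀ : ℤ) (j' : Fin k → ℤ) :
    sqInc Y (Fin.cons j₀ j')
      = sqInc (fun v => Y (Fin.cons j₀ v)) j' - sqInc (fun v => Y (Fin.cons (j₀ - 1) v)) j' := by
  rw [sqInc]
  rw [← Equiv.sum_comp (Fin.consEquiv (fun _ : Fin (k+1) => Bool))
    (fun i => (-1 : ℝ) ^ ((∑ l, if i l then 1 else 0 : ℕ)) *
      Y (fun l => (Fin.cons j₀ j' : Fin (k+1) → ℤ) l - if i l then 1 else 0)),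
    Fintype.sum_prod_type]
  rw [Fintype.sum_bool]
  have hexp : ∀ (bb : Bool) (i' : Fin k → Bool),
      (∑ l : Fin (k+1), if (Fin.consEquiv (fun _ : Fin (k+1) => Bool)) (bb, i') l then 1 else 0 : ℕ)
        = (if bb then 1 else 0) + (∑ l : Fin k, if i' l then 1 else 0 : ℕ) := by
    intro bb i'
    rw [Fin.sum_univ_succ]
    simp [Fin.consEquiv, Fin.cons_zero, Fin.cons_succ]
  have harg : ∀ (bb : Bool) (i' : Fin k → Bool),
      (fun l => Fin.cons j₀ j' l - if (Fin.consEquiv (fun _ : Fin (k+1) => Bool)) (bb, i') l then 1 else 0)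
        = Fin.cons (j₀ - if bb then 1 else 0) (fun l => j' l - if i' l then 1 else 0) := by
    intro bb i'
    funext l
    induction l using Fin.cases with
    | zero => simp [Fin.consEquiv, Fin.cons_zero]
    | succ m => simp [Fin.consEquiv, Fin.cons_succ]
  simp only [hexp, harg]
  simp only [if_true, if_false, pow_add, pow_one, pow_zero, one_mul]
  rw [sqInc, sqInc]
  simp only [Bool.false_eq_true, if_false, pow_zero, one_mul, sub_zero]
  have e1 : (∑ x : Fin k → Bool, (-1 * (-1:ℝ) ^ ((∑ l, if x l then 1 else 0 : ℕ))) *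
      Y (Fin.cons (j₀-1) fun l => j' l - if x l then 1 else 0))
      = - ∑ x : Fin k → Bool, ((-1:ℝ) ^ ((∑ l, if x l then 1 else 0 : ℕ))) *
      Y (Fin.cons (j₀-1) fun l => j' l - if x l then 1 else 0) := by
    rw [← Finset.sum_neg_distrib]
    exact Finset.sum_congr rfl fun x _ => by ring
  rw [e1]
  ring

lemma sqInc_sub {k : ℕ} (Y₁ Y₂ : (Fin k → ℤ) → ℝ) (j : Fin k → ℤ) :
    sqInc (fun u => Y₁ u - Y₂ u) j = sqInc Y₁ j - sqInc Y₂ j := by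
  simp only [sqInc, mul_sub]
  rw [Finset.sum_sub_distrib]

lemma telescope_Icc_aux (f : ℤ → ℝ) : ∀ (n : ℕ) (A : ℤ),
    ∑ j₀ ∈ Finset.Icc A (A + n), (f j₀ - f (j₀ - 1)) = f (A + n) - f (A - 1) := by
  intro n
  induction n with
  | zero => intro A; simp
  | succ n ih =>
    intro A
    have hins : Finset.Icc A (A + (n+1 : ℕ)) = insert (A + n + 1) (Finset.Icc A (A + n)) := by
      ext x; simp only [Finset.mem_Icc, Finset.mem_insert]; push_cast; omega
    rw [hins, Finset.sum_insert (by simp only [Finset.mem_Icc]; omega), ih A]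
    have h1 : A + ((n:ℕ):ℤ) + 1 - 1 = A + ((n:ℕ):ℤ) := by ring
    have h2 : A + (((n:ℕ)+1 : ℕ) : ℤ) = A + ((n:ℕ):ℤ) + 1 := by push_cast; ring
    rw [h1, h2]
    ring

lemma telescope_Icc (f : ℤ → ℝ) {A B : ℤ} (h : A ≤ B) :
    ∑ j₀ ∈ Finset.Icc A B, (f j₀ - f (j₀ - 1)) = f B - f (A - 1) := by
  obtain ⟨n, rfl⟩ : ∃ n : ℕ, B = A + n := ⟨(B - A).toNat, by omega⟩
  exact telescope_Icc_aux f n A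



lemma sum_Icc_cons_nat {k : ℕ} (M₁ : ℕ) (M' : Fin k → ℕ) (b : Fin (k+1) → ℤ)
    (f : (Fin (k+1) → ℤ) → ℝ) :
    ∑ j ∈ Finset.Icc (fun l => -(((Fin.cons M₁ M' : Fin (k+1) → ℕ) l : ℕ) : ℤ)) b, f j
      = ∑ j₀ ∈ Finset.Icc (-(M₁:ℤ)) (b 0),
          ∑ j' ∈ Finset.Icc (fun l => -(M' l : ℤ)) (Fin.tail b), f (Fin.cons j₀ j') := by
  rw [sum_Icc_cons]
  have e2 : Fin.tail (fun l : Fin (k+1) => -(((Fin.cons M₁ M' : Fin (k+1) → ℕ) l : ℕ) : ℤ))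
      = (fun l => -(M' l : ℤ)) := by
    funext l
    show -(((Fin.cons M₁ M' : Fin (k+1) → ℕ) l.succ : ℕ) : ℤ) = _
    rw [Fin.cons_succ]
  rw [e2]
  simp only [Fin.cons_zero]

lemma iterLim_key (μ : Measure Ω) :
    ∀ (k : ℕ) (X' : (Fin k → ℤ) → Ω → ℝ), TendZero μ X' → ∀ (Θ' : Fin k → ℝ),
    (∀ l, 0 < Θ' l) → ∀ (t : Fin k → ℤ),
    IterLimInProb μ k
      (fun M ω => ∑ j ∈ Finset.Icc (fun l => -(M l : ℤ)) t,
        sqInc (fun u => Real.exp (∑ l, (u l : ℝ) * Θ' l) * X' u ω) j)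
      (fun ω => Real.exp (∑ l, (t l : ℝ) * Θ' l) * X' t ω) := by
  intro k
  induction k with
  | zero =>
    intro X' _ Θ' _ t
    intro ω
    have ha : (fun l : Fin 0 => -((((fun i : Fin 0 => i.elim0) l : ℕ)) : ℤ)) = t :=
      Subsingleton.elim _ _
    show (∑ j ∈ Finset.Icc (fun l : Fin 0 => -((((fun i : Fin 0 => i.elim0) l : ℕ)) : ℤ)) t,
      sqInc (fun u => Real.exp (∑ l, (u l : ℝ) * Θ' l) * X' u ω) j) = _
    rw [ha, Finset.Icc_self, Finset.sum_singleton, sqInc]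
    have hb : ∀ i : Fin 0 → Bool, (fun l => t l - if i l then (1:ℤ) else 0) = t :=
      fun i => Subsingleton.elim _ _
    simp [hb]
  | succ k ih =>
    intro X' hX' Θ' hΘ' t
    refine ⟨fun M₁ => if -(M₁:ℤ) ≤ t 0 then
        (fun ω => Real.exp (∑ l, (Fin.tail t l : ℝ) * Θ' l.succ) *
          (Real.exp ((t 0 : ℝ) * Θ' 0) * X' (Fin.cons (t 0) (Fin.tail t)) ω
            + (-(Real.exp ((-(M₁:ℝ) - 1) * Θ' 0))) * X' (Fin.cons (-(M₁:ℤ) - 1) (Fin.tail t)) ω))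
      else (fun _ => 0), fun M₁ => ?_, ?_⟩
    · by_cases hM₁ : -(M₁:ℤ) ≤ t 0
      · have hc : TendZero μ (fun v ω => Real.exp ((t 0:ℝ) * Θ' 0) * X' (Fin.cons (t 0) v) ω
            + (-(Real.exp ((-(M₁:ℝ) - 1) * Θ' 0))) * X' (Fin.cons (-(M₁:ℤ) - 1) v) ω) :=
          tendZero_comb hX' _ _ _ _
        have ihi := ih (fun v ω => Real.exp ((t 0:ℝ) * Θ' 0) * X' (Fin.cons (t 0) v) ω
            + (-(Real.exp ((-(M₁:ℝ) - 1) * Θ' 0))) * X' (Fin.cons (-(M₁:ℤ) - 1) v) ω) hc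
            (fun l => Θ' l.succ) (fun l => hΘ' l.succ) (Fin.tail t)
        refine iterLim_congr ?_ (if_pos hM₁) ihi
        funext M' ω
        show (∑ j ∈ Finset.Icc (fun l => -(((Fin.cons M₁ M' : Fin (k+1) → ℕ) l : ℕ) : ℤ)) t,
            sqInc (fun u => Real.exp (∑ l, (u l : ℝ) * Θ' l) * X' u ω) j) = _
        rw [sum_Icc_cons_nat]
        -- abbreviate Y
        set Y : (Fin (k+1) → ℤ) → ℝ :=
          fun u => Real.exp (∑ l, (u l : ℝ) * Θ' l) * X' u ω with hY
        -- decompose sqInc along the first coordinate and swap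
        have h1 : ∀ j₀ (j' : Fin k → ℤ), sqInc Y (Fin.cons j₀ j')
            = sqInc (fun v => Y (Fin.cons j₀ v)) j' - sqInc (fun v => Y (Fin.cons (j₀-1) v)) j' :=
          fun j₀ j' => sqInc_cons Y j₀ j'
        calc (∑ j₀ ∈ Finset.Icc (-(M₁:ℤ)) (t 0),
              ∑ j' ∈ Finset.Icc (fun l => -(M' l : ℤ)) (Fin.tail t), sqInc Y (Fin.cons j₀ j'))
            = ∑ j' ∈ Finset.Icc (fun l => -(M' l : ℤ)) (Fin.tail t),
                ∑ j₀ ∈ Finset.Icc (-(M₁:ℤ)) (t 0),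
                  (sqInc (fun v => Y (Fin.cons j₀ v)) j'
                    - sqInc (fun v => Y (Fin.cons (j₀-1) v)) j') := by
              rw [Finset.sum_comm]
              exact Finset.sum_congr rfl fun j' _ => Finset.sum_congr rfl fun j₀ _ => h1 j₀ j'
          _ = ∑ j' ∈ Finset.Icc (fun l => -(M' l : ℤ)) (Fin.tail t),
                (sqInc (fun v => Y (Fin.cons (t 0) v)) j'
                  - sqInc (fun v => Y (Fin.cons (-(M₁:ℤ) - 1) v)) j') := by
              refine Finset.sum_congr rfl fun j' _ => ?_
              have := telescope_Icc (fun z => sqInc (fun v => Y (Fin.cons z v)) j') hM₁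
              rw [this]
          _ = ∑ j' ∈ Finset.Icc (fun l => -(M' l : ℤ)) (Fin.tail t),
                sqInc (fun v => Real.exp (∑ l, (v l : ℝ) * Θ' l.succ) *
                  (Real.exp ((t 0:ℝ) * Θ' 0) * X' (Fin.cons (t 0) v) ω
                    + (-(Real.exp ((-(M₁:ℝ) - 1) * Θ' 0))) * X' (Fin.cons (-(M₁:ℤ) - 1) v) ω)) j' := by
              refine Finset.sum_congr rfl fun j' _ => ?_
              rw [← sqInc_sub]
              congr 1
              funext v
              have hsplit : ∀ z : ℤ, (∑ l : Fin (k+1), ((Fin.cons z v : Fin (k+1) → ℤ) l : ℝ) * Θ' l)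
                  = (z:ℝ) * Θ' 0 + ∑ l : Fin k, (v l : ℝ) * Θ' l.succ := by
                intro z
                rw [Fin.sum_univ_succ]
                simp [Fin.cons_zero, Fin.cons_succ]
              rw [hY]
              show Real.exp (∑ l, ((Fin.cons (t 0) v : Fin (k+1) → ℤ) l : ℝ) * Θ' l) *
                    X' (Fin.cons (t 0) v) ω
                  - Real.exp (∑ l, ((Fin.cons (-(M₁:ℤ)-1) v : Fin (k+1) → ℤ) l : ℝ) * Θ' l) *
                    X' (Fin.cons (-(M₁:ℤ)-1) v) ω = _
              rw [hsplit (t 0), hsplit (-(M₁:ℤ)-1), Real.exp_add, Real.exp_add]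
              push_cast
              ring
      · refine iterLim_congr ?_ (if_neg hM₁) (iterLim_const μ k (fun _ => (0:ℝ)))
        funext M' ω
        show (∑ j ∈ Finset.Icc (fun l => -(((Fin.cons M₁ M' : Fin (k+1) → ℕ) l : ℕ) : ℤ)) t,
            sqInc (fun u => Real.exp (∑ l, (u l : ℝ) * Θ' l) * X' u ω) j) = 0
        have hempty : ¬ ((fun l => -(((Fin.cons M₁ M' : Fin (k+1) → ℕ) l : ℕ) : ℤ)) ≤ t) := by
          intro hle
          have := hle 0
          simp only [Fin.cons_zero] at this
          exact hM₁ this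
        rw [Finset.Icc_eq_empty hempty, Finset.sum_empty]
    · -- outer limit
      rw [tendstoInMeasure_iff_dist]
      intro ε hε
      have hθ0 : 0 < Θ' 0 := hΘ' 0
      have h1 : Tendsto (fun M₁ : ℕ => (-(M₁:ℝ) - 1) * Θ' 0) atTop atBot := by
        have h2 : Tendsto (fun M₁ : ℕ => (M₁:ℝ) + 1) atTop atTop :=
          tendsto_atTop_add_const_right atTop 1 tendsto_natCast_atTop_atTop
        have h3 : Tendsto (fun M₁ : ℕ => -((M₁:ℝ) + 1)) atTop atBot :=
          tendsto_neg_atTop_atBot.comp h2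
        have h4 : Tendsto (fun M₁ : ℕ => -((M₁:ℝ) + 1) * Θ' 0) atTop atBot :=
          h3.atBot_mul_const hθ0
        refine h4.congr fun M₁ => by ring
      have hrtend : Tendsto (fun M₁ : ℕ => Real.exp (∑ l, (Fin.tail t l : ℝ) * Θ' l.succ) *
          Real.exp ((-(M₁:ℝ) - 1) * Θ' 0)) atTop (𝓝 0) := by
        have h2 := Real.tendsto_exp_atBot.comp h1
        have h3 := h2.const_mul (Real.exp (∑ l, (Fin.tail t l : ℝ) * Θ' l.succ))
        simpa using h3
      have hmain := hX' ε hε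
        (fun M₁ => Real.exp (∑ l, (Fin.tail t l : ℝ) * Θ' l.succ) *
          Real.exp ((-(M₁:ℝ) - 1) * Θ' 0))
        (fun M₁ => Fin.cons (-(M₁:ℤ) - 1) (Fin.tail t)) hrtend
      refine hmain.congr' ?_
      have hgood : ∀ᶠ M₁ : ℕ in atTop, -(M₁:ℤ) ≤ t 0 := by
        filter_upwards [eventually_ge_atTop ((-(t 0)).toNat)] with M hM
        omega
      filter_upwards [hgood] with M₁ hM₁
      congr 1
      ext ω
      simp only [Set.mem_setOf_eq, Real.dist_eq, hM₁, if_true]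
      have hexp : Real.exp (∑ l : Fin (k+1), (t l : ℝ) * Θ' l)
          = Real.exp ((t 0 : ℝ) * Θ' 0) *
            Real.exp (∑ l : Fin k, (Fin.tail t l : ℝ) * Θ' l.succ) := by
        rw [← Real.exp_add]
        congr 1
        rw [Fin.sum_univ_succ]
        simp [Fin.tail]
      have hct : (Fin.cons (t 0) (Fin.tail t) : Fin (k+1) → ℤ) = t := Fin.cons_self_tail t
      have hdiff : Real.exp (∑ l : Fin k, (Fin.tail t l : ℝ) * Θ' l.succ) *
            (Real.exp ((t 0 : ℝ) * Θ' 0) * X' (Fin.cons (t 0) (Fin.tail t)) ω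
              + (-(Real.exp ((-(M₁:ℝ) - 1) * Θ' 0))) * X' (Fin.cons (-(M₁:ℤ) - 1) (Fin.tail t)) ω)
            - Real.exp (∑ l : Fin (k+1), (t l : ℝ) * Θ' l) * X' t ω
          = -(Real.exp (∑ l : Fin k, (Fin.tail t l : ℝ) * Θ' l.succ) *
              Real.exp ((-(M₁:ℝ) - 1) * Θ' 0) * X' (Fin.cons (-(M₁:ℤ) - 1) (Fin.tail t)) ω) := by
        rw [hexp, hct]
        ring
      rw [hdiff, abs_neg]

end Laux

/-- Theorem gchar2: every stationary random field `X` on `ℤ^N`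
admits a representation `X_t = ⟨Θ̂, X̂⁻_t⟩ + Δ_t G` with some `G ∈ 𝒢_Θ`. -/
theorem representation_of_stationary {Ω : Type*} [MeasurableSpace Ω]
    (μ : Measure Ω) [IsProbabilityMeasure μ] {N : ℕ} (hN : 1 ≤ N)
    (Θ : Fin N → ℝ) (hΘ : ∀ l, 0 < Θ l)
    (X : (Fin N → ℤ) → Ω → ℝ) (hmeas : ∀ t, Measurable (X t))
    (hX : IsStationaryField μ X) :
    ∃ G : (Fin N → ℤ) → Ω → ℝ, MemClassG μ Θ G ∧
      ∀ t ω, X t ω = prevInner Θ (fun u => X u ω) t + sqInc (fun u => G u ω) t := by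
  classical
  set G : (Fin N → ℤ) → Ω → ℝ := fun t ω => Laux.Gfun Θ (fun u => X u ω) t with hG
  have hkey : ∀ (t : Fin N → ℤ) (ω : Ω),
      sqInc (fun u => G u ω) t = Laux.gfun Θ (fun u => X u ω) t := by
    intro t ω
    have heq : (fun u => G u ω) = Laux.Gfun Θ (fun u => X u ω) := rfl
    rw [heq]
    exact Laux.sqInc_Gfun hN Θ _ t
  refine ⟨G, ⟨?_, ?_, ?_⟩, ?_⟩
  · have h1 : (fun t ω => sqInc (fun u => G u ω) t)
        = (fun t ω => Laux.gfun Θ (fun u => X u ω) t) := by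
      funext t ω; exact hkey t ω
    show IsStationaryField μ (fun t ω => sqInc (fun u => G u ω) t)
    rw [h1]
    exact Laux.gfun_stationary μ Θ X hmeas hX
  · intro t h1 h2 ω
    exact Laux.Gfun_band Θ _ t h1 h2
  · intro t
    refine ⟨fun ω => Real.exp (∑ l, (t l : ℝ) * Θ l) * X t ω, ?_⟩
    have hF : (fun (M : Fin N → ℕ) (ω : Ω) => ∑ j ∈ Finset.Icc (fun l => -(M l : ℤ)) t,
        Real.exp (∑ l, (j l : ℝ) * Θ l) * sqInc (fun u => G u ω) j)
        = (fun (M : Fin N → ℕ) (ω : Ω) => ∑ j ∈ Finset.Icc (fun l => -(M l : ℤ)) t,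
            sqInc (fun u => Real.exp (∑ l, (u l : ℝ) * Θ l) * X u ω) j) := by
      funext M ω
      refine Finset.sum_congr rfl fun j _ => ?_
      rw [hkey j ω, ← Laux.exp_gfun]
    exact Laux.iterLim_congr hF rfl
      (Laux.iterLim_key μ N X (Laux.tendZero_of_stationary μ X hmeas hX) Θ hΘ t)
  · intro t ω
    rw [hkey t ω]
    exact Laux.gfun_eq Θ (fun u => X u ω) t
end
end

section
/- Let N ≥ 1 and let G, G' : ℤ^N → ℝ be functions such that G_t = G'_t = 0 for all t with Σ_{l=1}^N t_l ∈ {0,−1,…,−N+1}, and such that the square increments agree: Δ_t G = Δ_t G' for every t ∈ ℤ^N. Then G_t = G'_t for every t ∈ ℤ^N. Consequently, for fixed Θ ∈ (0,∞)^N, the field G ∈ 𝒢_Θ satisfying the representation X_t = ⟨Θ̂, X̂⁻_t⟩ + Δ_t G of a stationary field X is unique. -/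
open MeasureTheory Filter

noncomputable section

private lemma sqInc_zero_imp {N : ℕ} (hN : 1 ≤ N) (H : (Fin N → ℤ) → ℝ)
    (h0 : ∀ t : Fin N → ℤ, -(N : ℤ) + 1 ≤ ∑ l, t l → (∑ l, t l) ≤ 0 → H t = 0)
    (hΔ : ∀ t, sqInc H t = 0) : ∀ t, H t = 0 := by
  suffices key : ∀ n : ℕ, ∀ t : Fin N → ℤ,
      (∑ l, t l).toNat + (-(N : ℤ) + 1 - ∑ l, t l).toNat = n → H t = 0 by
    exact fun t => key _ t rfl
  intro n
  induction n using Nat.strong_induction_on with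
  | _ n ih =>
  intro t ht
  set s := ∑ l, t l with hsdef
  by_cases hcase : -(N : ℤ) + 1 ≤ s ∧ s ≤ 0
  · exact h0 t hcase.1 hcase.2
  -- generic weight facts
  have wle : ∀ i : Fin N → Bool, (∑ l, if i l then (1:ℤ) else 0) ≤ N := by
    intro i
    calc (∑ l, if i l then (1:ℤ) else 0) ≤ ∑ _l : Fin N, (1:ℤ) := by
          apply Finset.sum_le_sum; intro l _; split <;> omega
      _ = N := by simp
  have wnonneg : ∀ i : Fin N → Bool, 0 ≤ (∑ l, if i l then (1:ℤ) else 0) := by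
    intro i
    apply Finset.sum_nonneg; intro l _; split <;> omega
  rcases lt_or_ge s 1 with hlt | hge
  · -- s ≤ -N
    have hsN : s ≤ -(N : ℤ) := by omega
    have h1 := hΔ (fun l => t l + 1)
    unfold sqInc at h1
    rw [← Finset.add_sum_erase _ _ (Finset.mem_univ (fun _ => true))] at h1
    have hrest : ∑ i ∈ Finset.univ.erase (fun _ => true),
        (-1 : ℝ) ^ ((∑ l, if i l then 1 else 0 : ℕ)) *
          H (fun l => (t l + 1) - if i l then 1 else 0) = 0 := by
      apply Finset.sum_eq_zero
      intro i hi
      have hine : i ≠ fun _ => true := (Finset.mem_erase.mp hi).1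
      obtain ⟨l₀, hl₀⟩ : ∃ l₀, i l₀ = false := by
        by_contra hco
        push_neg at hco
        exact hine (funext fun l => by simpa using hco l)
      set w : ℤ := ∑ l, if i l then (1:ℤ) else 0 with hw
      have hwlt : w < N := by
        have h1' : w = (∑ l ∈ Finset.univ.erase l₀, if i l then (1:ℤ) else 0)
            + (if i l₀ then (1:ℤ) else 0) := by
          rw [hw, ← Finset.sum_erase_add _ _ (Finset.mem_univ l₀)]
        have h2' : (∑ l ∈ Finset.univ.erase l₀, if i l then (1:ℤ) else 0)
            ≤ (N : ℤ) - 1 := by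
          calc (∑ l ∈ Finset.univ.erase l₀, if i l then (1:ℤ) else 0)
              ≤ ∑ _l ∈ Finset.univ.erase l₀, (1:ℤ) := by
                apply Finset.sum_le_sum; intro l _; split <;> omega
            _ = (N : ℤ) - 1 := by
                simp [Finset.card_erase_of_mem]
                omega
        rw [hl₀] at h1'
        simp only [Bool.false_eq_true, if_false, add_zero] at h1'
        omega
      have hsum : ∑ l, ((t l + 1) - if i l then (1:ℤ) else 0) = s + N - w := by
        rw [Finset.sum_sub_distrib, Finset.sum_add_distrib]
        simp only [Finset.sum_const, Finset.card_univ, Fintype.card_fin, smul_eq_mul,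
          mul_one, nsmul_eq_mul]
        try omega
      have hwnn := wnonneg i
      have hz : H (fun l => (t l + 1) - if i l then 1 else 0) = 0 := by
        by_cases hstrip : -(N : ℤ) + 1 ≤ s + N - w
        · refine h0 _ ?_ ?_ <;> rw [hsum] <;> omega
        · refine ih ((s + N - w).toNat + (-(N : ℤ) + 1 - (s + N - w)).toNat)
            (by omega) _ (by rw [hsum])
      rw [hz, mul_zero]
    rw [hrest, add_zero] at h1
    have hNpow : ((-1 : ℝ) ^ ((∑ l : Fin N, if (fun _ => true) l then 1 else 0 : ℕ))) ≠ 0 := by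
      apply pow_ne_zero; norm_num
    have hpt : (fun l => (t l + 1) - if (fun _ : Fin N => true) l then (1:ℤ) else 0) = t := by
      funext l; simp
    rw [hpt] at h1
    exact (mul_eq_zero.mp h1).resolve_left hNpow
  · -- s ≥ 1
    have h1 := hΔ t
    unfold sqInc at h1
    rw [← Finset.add_sum_erase _ _ (Finset.mem_univ (fun _ => false))] at h1
    have hrest : ∑ i ∈ Finset.univ.erase (fun _ => false),
        (-1 : ℝ) ^ ((∑ l, if i l then 1 else 0 : ℕ)) *
          H (fun l => t l - if i l then 1 else 0) = 0 := by
      apply Finset.sum_eq_zero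
      intro i hi
      have hine : i ≠ fun _ => false := (Finset.mem_erase.mp hi).1
      obtain ⟨l₀, hl₀⟩ : ∃ l₀, i l₀ = true := by
        by_contra hco
        push_neg at hco
        exact hine (funext fun l => by simpa using hco l)
      set w : ℤ := ∑ l, if i l then (1:ℤ) else 0 with hw
      have hwpos : 1 ≤ w := by
        rw [hw]
        have : (if i l₀ then (1:ℤ) else 0) ≤ ∑ l, if i l then (1:ℤ) else 0 :=
          Finset.single_le_sum (f := fun l => if i l then (1:ℤ) else 0)
            (fun l _ => by by_cases h : i l = true <;> simp [h]) (Finset.mem_univ l₀)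
        rw [hl₀] at this
        simpa using this
      have hwle := wle i
      have hsum : ∑ l, (t l - if i l then (1:ℤ) else 0) = s - w := by
        rw [Finset.sum_sub_distrib]
      have hz : H (fun l => t l - if i l then 1 else 0) = 0 := by
        by_cases hstrip : s - w ≤ 0
        · exact h0 _ (by rw [hsum]; omega) (by rw [hsum]; exact hstrip)
        · refine ih ((s - w).toNat + (-(N : ℤ) + 1 - (s - w)).toNat)
            (by omega) _ (by rw [hsum])
      rw [hz, mul_zero]
    rw [hrest, add_zero] at h1
    have hpt : (fun l => t l - if (fun _ : Fin N => false) l then (1:ℤ) else 0) = t := by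
      funext l; simp
    rw [hpt] at h1
    simpa using h1

/-- Lemma guniqueness: if `G, G' : ℤ^N → ℝ` vanish whenever
`Σ_l t_l ∈ {0,−1,…,−N+1}` and have the same square increments, then `G = G'`.
Consequently, the field `G ∈ 𝒢_Θ` in the representation
`X_t = ⟨Θ̂, X̂⁻_t⟩ + Δ_t G` of a stationary field `X` is unique. -/
theorem increments_determine_G {N : ℕ} (hN : 1 ≤ N) :
    (∀ G G' : (Fin N → ℤ) → ℝ,
      (∀ t : Fin N → ℤ, -(N : ℤ) + 1 ≤ ∑ l, t l → (∑ l, t l) ≤ 0 → G t = 0) →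
      (∀ t : Fin N → ℤ, -(N : ℤ) + 1 ≤ ∑ l, t l → (∑ l, t l) ≤ 0 → G' t = 0) →
      (∀ t, sqInc G t = sqInc G' t) →
      ∀ t, G t = G' t) ∧
    (∀ (Ω : Type) [MeasurableSpace Ω] (μ : Measure Ω) [IsProbabilityMeasure μ]
      (Θ : Fin N → ℝ), (∀ l, 0 < Θ l) →
      ∀ (X G G' : (Fin N → ℤ) → Ω → ℝ),
        IsStationaryField μ X →
        MemClassG μ Θ G → MemClassG μ Θ G' →
        (∀ t ω, X t ω = prevInner Θ (fun u => X u ω) t + sqInc (fun u => G u ω) t) →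
        (∀ t ω, X t ω = prevInner Θ (fun u => X u ω) t + sqInc (fun u => G' u ω) t) →
        ∀ t, G t = G' t) := by
  have part1 : ∀ G G' : (Fin N → ℤ) → ℝ,
      (∀ t : Fin N → ℤ, -(N : ℤ) + 1 ≤ ∑ l, t l → (∑ l, t l) ≤ 0 → G t = 0) →
      (∀ t : Fin N → ℤ, -(N : ℤ) + 1 ≤ ∑ l, t l → (∑ l, t l) ≤ 0 → G' t = 0) →
      (∀ t, sqInc G t = sqInc G' t) → ∀ t, G t = G' t := by
    intro G G' hG hG' hΔ t
    have hz := sqInc_zero_imp hN (fun u => G u - G' u)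
      (fun u h1 h2 => by show G u - G' u = 0; rw [hG u h1 h2, hG' u h1 h2, sub_zero])
      (fun u => by
        have hlin : sqInc (fun v => G v - G' v) u = sqInc G u - sqInc G' u := by
          unfold sqInc
          rw [← Finset.sum_sub_distrib]
          congr 1; funext i; ring
        rw [hlin, hΔ, sub_self]) t
    have : G t - G' t = 0 := hz
    linarith
  refine ⟨part1, ?_⟩
  intro Ω _ μ _ Θ hΘ X G G' hX hG hG' hrep hrep' t
  funext ω
  exact part1 (fun u => G u ω) (fun u => G' u ω)
    (fun u h1 h2 => hG.2.1 u h1 h2 ω)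
    (fun u h1 h2 => hG'.2.1 u h1 h2 ω)
    (fun u => by have h1 := hrep u ω; have h2 := hrep' u ω; linarith) t
end
end
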